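/- arXiv:2004.05602 — 3 statements merged into one kernel-verified Lean document; each statement's English description precedes it below -/
import Mathlib

section
/- Let κ > 1, A₁ > 0, D > 0, and let g : ℕ → ℂ be multiplicative, supported on squarefree numbers, with |g(n)| ≤ d_{κ+1}(n) for every N-smooth n, and g(p) = 0 for every prime p ≤ C. Let q < N be a squarefree positive integer such that every prime p | q satisfies p > C and Σ_{p | q} (log p)^{A₁+1}/p^{3/4} ≤ D. Define H_q(z) = Π_{p|q}(1 + g(p)/p^z) and G̃_q(z) = Π_{p|q}(1 + |g(p)|/p^z) for Re(z) ≥ 1. Then for every positive integer h: max{ |(H_q^{−1})^{(h)}(1)|, |G̃_q^{(h)}(1)| } ≤ C' · C^{−1/5}, where C' depends only on h, κ, A₁ and D, provided C is sufficiently large in terms of κ and h (in particular C > κ+1). Moreover, there are positive constants c₁, c₂ depending only on κ and D such that c₁ ≤ |H_q^{−1}(1)| ≤ c₂ and c₁ ≤ G̃_q(1) ≤ c₂. -/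
open Finset

/-- The real `κ`-fold divisor function `d_κ`, given on prime powers `p^k` by
`κ(κ+1)⋯(κ+k−1)/k!`. -/
noncomputable def dR (κ : ℝ) (n : ℕ) : ℝ :=
  n.factorization.prod fun _ k => (∏ i ∈ Finset.range k, (κ + (i : ℝ))) / (Nat.factorial k : ℝ)

open Metric NNReal in
lemma cauchy_bound {f : ℂ → ℂ} {c : ℂ} {M : ℝ} {R : ℝ≥0} (hR : 0 < R)
    (hf : DifferentiableOn ℂ f (Metric.closedBall c R))
    (hM : ∀ z ∈ Metric.closedBall c R, ‖f z‖ ≤ M) (n : ℕ) :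
    ‖iteratedDeriv n f c‖ ≤ n.factorial * M / (R : ℝ) ^ n := by
  have hp := hf.hasFPowerSeriesOnBall hR
  have hM0 : 0 ≤ M := le_trans (norm_nonneg _) (hM c (Metric.mem_closedBall_self (by positivity)))
  have h1 : iteratedDeriv n f c = iteratedFDeriv ℂ n f c fun _ => 1 :=
    iteratedDeriv_eq_iteratedFDeriv ..
  have h2 := hp.factorial_smul (1 : ℂ) n
  have h3 : ‖iteratedDeriv n f c‖ = n.factorial * ‖cauchyPowerSeries f c R n fun _ => (1:ℂ)‖ := by
    rw [h1, ← h2, ← Nat.cast_smul_eq_nsmul ℝ, norm_smul]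
    simp
  rw [h3]
  have h4 : ‖cauchyPowerSeries f c R n fun _ => (1:ℂ)‖ ≤ ‖cauchyPowerSeries f c R n‖ := by
    have h := (cauchyPowerSeries f c R n).le_opNorm fun _ => (1:ℂ)
    simp only [norm_one, Finset.prod_const_one, mul_one] at h
    exact h
  have h5 := norm_cauchyPowerSeries_le f c R n
  have hint : ∫ θ : ℝ in (0)..2 * Real.pi, ‖f (circleMap c R θ)‖ ≤ 2 * Real.pi * M := by
    have : ∫ θ : ℝ in (0)..2 * Real.pi, ‖f (circleMap c R θ)‖ ≤
        ∫ θ : ℝ in (0)..2 * Real.pi, M := by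
      apply intervalIntegral.integral_mono_on Real.two_pi_pos.le _ intervalIntegrable_const
      · intro θ _
        exact hM _ (sphere_subset_closedBall (circleMap_mem_sphere c R.coe_nonneg θ))
      · apply Continuous.intervalIntegrable
        exact (hf.continuousOn.comp_continuous (continuous_circleMap c R)
          fun θ => sphere_subset_closedBall (circleMap_mem_sphere c R.coe_nonneg θ)).norm
    simpa [mul_comm] using this
  calc (n.factorial : ℝ) * ‖cauchyPowerSeries f c R n fun _ => (1:ℂ)‖
      ≤ n.factorial * (((2 * Real.pi)⁻¹ * (2 * Real.pi * M)) * |(R:ℝ)|⁻¹ ^ n) := by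
        apply mul_le_mul_of_nonneg_left _ (by positivity)
        refine le_trans h4 (le_trans h5 ?_)
        apply mul_le_mul_of_nonneg_right _ (by positivity)
        exact mul_le_mul_of_nonneg_left hint (by positivity)
    _ = n.factorial * M / (R : ℝ) ^ n := by
        rw [inv_mul_cancel_left₀ Real.two_pi_pos.ne']
        rw [abs_of_nonneg R.coe_nonneg, div_eq_mul_inv, mul_assoc, inv_pow]


lemma dR_prime {κ : ℝ} {p : ℕ} (hp : p.Prime) : dR κ p = κ := by
  unfold dR
  rw [hp.factorization, Finsupp.prod_single_index] <;> simp

lemma norm_one_add_ge {w : ℂ} : 1 - ‖w‖ ≤ ‖1 + w‖ := by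
  have h := norm_sub_le (1 + w) w
  simp only [add_sub_cancel_right] at h
  linarith [norm_one (α := ℂ)]

lemma norm_prod_one_add_sub_one_le {ι : Type*} (s : Finset ι) (w : ι → ℂ) (u : ι → ℝ)
    (h : ∀ i ∈ s, ‖w i‖ ≤ u i) :
    ‖(∏ i ∈ s, (1 + w i)) - 1‖ ≤ (∏ i ∈ s, (1 + u i)) - 1 := by
  classical
  induction s using Finset.induction_on with
  | empty => simp
  | insert _ _ ha ih =>
    rename_i a t
    have hwt : ∀ i ∈ t, ‖w i‖ ≤ u i := fun i hi => h i (Finset.mem_insert_of_mem hi)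
    have hu : ∀ i ∈ t, 0 ≤ u i := fun i hi => le_trans (norm_nonneg _) (hwt i hi)
    have hua : 0 ≤ u a := le_trans (norm_nonneg _) (h a (Finset.mem_insert_self a t))
    have hwa : ‖w a‖ ≤ u a := h a (Finset.mem_insert_self a t)
    rw [Finset.prod_insert ha, Finset.prod_insert ha]
    have hprod : ‖∏ i ∈ t, (1 + w i)‖ ≤ ∏ i ∈ t, (1 + u i) := by
      rw [norm_prod]
      apply Finset.prod_le_prod (fun i _ => norm_nonneg _)
      intro i hi
      calc ‖1 + w i‖ ≤ ‖(1:ℂ)‖ + ‖w i‖ := norm_add_le _ _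
        _ ≤ 1 + u i := by rw [norm_one]; linarith [hwt i hi]
    have key : (1 + w a) * ∏ i ∈ t, (1 + w i) - 1
        = ((∏ i ∈ t, (1 + w i)) - 1) + w a * ∏ i ∈ t, (1 + w i) := by ring
    rw [key]
    have ih' := ih hwt
    calc ‖((∏ i ∈ t, (1 + w i)) - 1) + w a * ∏ i ∈ t, (1 + w i)‖
        ≤ ‖(∏ i ∈ t, (1 + w i)) - 1‖ + ‖w a * ∏ i ∈ t, (1 + w i)‖ := norm_add_le _ _
      _ ≤ ((∏ i ∈ t, (1 + u i)) - 1) + u a * ∏ i ∈ t, (1 + u i) := by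
          rw [norm_mul]
          have h2 : ‖w a‖ * ‖∏ i ∈ t, (1 + w i)‖ ≤ u a * ∏ i ∈ t, (1 + u i) :=
            mul_le_mul hwa hprod (norm_nonneg _) hua
          linarith
      _ = (1 + u a) * (∏ i ∈ t, (1 + u i)) - 1 := by ring

lemma prod_one_add_le_exp {ι : Type*} (s : Finset ι) (u : ι → ℝ) (hu : ∀ i ∈ s, 0 ≤ u i) :
    ∏ i ∈ s, (1 + u i) ≤ Real.exp (∑ i ∈ s, u i) := by
  rw [Real.exp_sum]
  apply Finset.prod_le_prod (fun i hi => by linarith [hu i hi])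
  intro i _
  linarith [Real.add_one_le_exp (u i)]

lemma exp_sub_one_le_mul {S : ℝ} (hS : 0 ≤ S) : Real.exp S - 1 ≤ S * Real.exp S := by
  have h := Real.add_one_le_exp (-S)
  have h2 : Real.exp (-S) * Real.exp S = 1 := by
    rw [← Real.exp_add]; simp
  nlinarith [Real.exp_pos S]


lemma gp_le {κ : ℝ} {N : ℕ} {g : ℕ → ℂ} {q : ℕ}
    (hbound : ∀ n : ℕ, 0 < n → (∀ p : ℕ, p.Prime → p ∣ n → p ≤ N) →
      ‖g n‖ ≤ dR (κ + 1) n)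
    (hqN : q < N) (p : ℕ) (hp : p ∈ q.primeFactors) : ‖g p‖ ≤ κ + 1 := by
  obtain ⟨hpp, hdvd, hq0⟩ := Nat.mem_primeFactors.mp hp
  have hpq : p ≤ q := Nat.le_of_dvd (Nat.pos_of_ne_zero hq0) hdvd
  have h := hbound p hpp.pos (fun r hr hrp => by
    rw [(Nat.prime_dvd_prime_iff_eq hr hpp).mp hrp]; omega)
  rwa [dR_prime hpp] at h

lemma log_ge_one {p : ℕ} (hp3 : 3 ≤ p) : 1 ≤ Real.log p := by
  rw [Real.le_log_iff_exp_le (by positivity)]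
  have := Real.exp_one_lt_d9
  have : (3:ℝ) ≤ p := by exact_mod_cast hp3
  linarith [Real.exp_one_lt_d9]

lemma inv_le_logterm {A₁ : ℝ} (hA : 0 < A₁) {p : ℕ} (hp3 : 3 ≤ p) :
    (p:ℝ)⁻¹ ≤ Real.log p ^ (A₁ + 1) / (p : ℝ) ^ ((3 : ℝ) / 4) := by
  have hp0 : (0:ℝ) < p := by positivity
  have hp1 : (1:ℝ) ≤ p := by exact_mod_cast le_trans (by norm_num) hp3
  have hlog : 1 ≤ Real.log p ^ (A₁ + 1) :=
    Real.one_le_rpow (log_ge_one hp3) (by linarith)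
  have hdiv : Real.log ↑p ^ (A₁ + 1) / (p:ℝ) ^ ((3:ℝ)/4)
      = Real.log ↑p ^ (A₁ + 1) * (p:ℝ) ^ (-((3:ℝ)/4)) := by
    rw [Real.rpow_neg hp0.le, div_eq_mul_inv]
  rw [hdiv]
  calc (p:ℝ)⁻¹ = (p:ℝ) ^ (-(1:ℝ)) := by rw [Real.rpow_neg_one]
    _ ≤ (p:ℝ) ^ (-(3:ℝ)/4) := Real.rpow_le_rpow_of_exponent_le hp1 (by norm_num)
    _ ≤ Real.log p ^ (A₁ + 1) * (p:ℝ) ^ (-((3:ℝ)/4)) := by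
        rw [show (-(3:ℝ)/4) = -((3:ℝ)/4) by norm_num]
        exact le_mul_of_one_le_left (by positivity) hlog

lemma rpow_le_logterm {A₁ C : ℝ} (hA : 0 < A₁) (hC0 : 0 < C) {p : ℕ}
    (hp3 : 3 ≤ p) (hpC : C < p) :
    (p:ℝ) ^ (-(39:ℝ)/40) ≤
      C ^ (-(9:ℝ)/40) * (Real.log p ^ (A₁ + 1) / (p : ℝ) ^ ((3 : ℝ) / 4)) := by
  have hp0 : (0:ℝ) < p := by positivity
  have hlog : 1 ≤ Real.log p ^ (A₁ + 1) :=
    Real.one_le_rpow (log_ge_one hp3) (by linarith)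
  have hsplit : (p:ℝ) ^ (-(39:ℝ)/40) = (p:ℝ) ^ (-(9:ℝ)/40) * (p:ℝ) ^ (-((3:ℝ)/4)) := by
    rw [← Real.rpow_add hp0]; norm_num
  have hdiv : Real.log ↑p ^ (A₁ + 1) / (p:ℝ) ^ ((3:ℝ)/4)
      = Real.log ↑p ^ (A₁ + 1) * (p:ℝ) ^ (-((3:ℝ)/4)) := by
    rw [Real.rpow_neg hp0.le, div_eq_mul_inv]
  rw [hsplit, hdiv]
  have h1 : (p:ℝ) ^ (-(9:ℝ)/40) ≤ C ^ (-(9:ℝ)/40) :=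
    Real.rpow_le_rpow_of_nonpos hC0 hpC.le (by norm_num)
  have h2 : (p:ℝ) ^ (-((3:ℝ)/4)) ≤ Real.log p ^ (A₁ + 1) * (p:ℝ) ^ (-((3:ℝ)/4)) :=
    le_mul_of_one_le_left (by positivity) hlog
  exact mul_le_mul h1 h2 (by positivity) (by positivity)

lemma one_sub_ge {x δ : ℝ} (hδ : 0 < δ) (hx : 0 ≤ x) (hxδ : x ≤ 1 - δ) :
    Real.exp (-(x / δ)) ≤ 1 - x := by
  have h1 : 1 + x / δ ≤ Real.exp (x / δ) := by linarith [Real.add_one_le_exp (x / δ)]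
  have hpos : 0 < 1 + x / δ := by positivity
  have h2 : Real.exp (-(x / δ)) ≤ (1 + x / δ)⁻¹ := by
    rw [Real.exp_neg]
    exact inv_anti₀ hpos h1
  have h3 : (1 + x / δ)⁻¹ = δ / (δ + x) := by
    field_simp
  have h4 : δ / (δ + x) ≤ 1 - x := by
    rw [div_le_iff₀ (by positivity)]
    nlinarith
  linarith


open NNReal in
lemma deriv_prod_bound {s : Finset ℕ} {φ : ℕ → ℂ → ℂ} {u : ℕ → ℝ} {S : ℝ} {h : ℕ} (hh : 1 ≤ h)
    (hdiff : ∀ p ∈ s, DifferentiableOn ℂ (φ p) (Metric.closedBall 1 ((1:ℝ)/40)))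
    (hbound : ∀ p ∈ s, ∀ z ∈ Metric.closedBall (1:ℂ) ((1:ℝ)/40), ‖φ p z - 1‖ ≤ u p)
    (hS : ∑ p ∈ s, u p ≤ S) (hS0 : 0 ≤ S) :
    ‖iteratedDeriv h (fun z => ∏ p ∈ s, φ p z) 1‖
      ≤ h.factorial * 40 ^ h * (S * Real.exp S) := by
  set E : ℂ → ℂ := fun z => (∏ p ∈ s, φ p z) - 1 with hE
  have hu0 : ∀ p ∈ s, 0 ≤ u p := by
    intro p hp
    exact le_trans (norm_nonneg _)
      (hbound p hp 1 (Metric.mem_closedBall_self (by norm_num)))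
  have hEd : DifferentiableOn ℂ E (Metric.closedBall 1 ((1:ℝ)/40)) := by
    apply DifferentiableOn.sub_const
    exact DifferentiableOn.fun_finsetProd hdiff
  have hEM : ∀ z ∈ Metric.closedBall (1:ℂ) ((1:ℝ)/40), ‖E z‖ ≤ S * Real.exp S := by
    intro z hz
    have h1 : ‖E z‖ ≤ (∏ p ∈ s, (1 + u p)) - 1 := by
      have := norm_prod_one_add_sub_one_le s (fun p => φ p z - 1) u
        (fun p hp => hbound p hp z hz)
      simpa using this
    have h2 : (∏ p ∈ s, (1 + u p)) - 1 ≤ Real.exp S - 1 := by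
      have := prod_one_add_le_exp s u hu0
      have hm : Real.exp (∑ p ∈ s, u p) ≤ Real.exp S := Real.exp_le_exp.2 hS
      linarith
    linarith [exp_sub_one_le_mul hS0]
  have hR : (0:ℝ≥0) < (1/40 : ℝ≥0) := by norm_num
  have hcb := cauchy_bound (c := 1) (M := S * Real.exp S) (R := (1/40 : ℝ≥0)) hR
    (by simpa using hEd) (by simpa using hEM) h
  have heq : iteratedDeriv h (fun z => ∏ p ∈ s, φ p z) 1 = iteratedDeriv h E 1 := by
    obtain ⟨m, rfl⟩ := Nat.exists_eq_add_of_le' hh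
    rw [iteratedDeriv_succ', iteratedDeriv_succ']
    congr 1
    funext z
    rw [hE]
    rw [deriv_sub_const]
  rw [heq]
  refine le_trans hcb ?_
  have : ((1/40 : ℝ≥0) : ℝ) = 1/40 := by norm_num
  rw [this]
  rw [div_eq_mul_inv, ← inv_pow, mul_comm (↑h.factorial * (S * Real.exp S))]
  rw [one_div, inv_inv]
  ring_nf
  exact le_refl _


lemma partB_core (κ A₁ D : ℝ) (hκ : 1 < κ) (hA₁pos : 0 < A₁) (hD : 0 < D) :
    (∃ c₁ c₂ : ℝ, 0 < c₁ ∧ 0 < c₂ ∧ ∀ C : ℝ, κ + 1 < C →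
      ∀ (N : ℕ) (g : ℕ → ℂ) (q : ℕ),
        g 1 = 1 →
        (∀ m n : ℕ, Nat.Coprime m n → g (m * n) = g m * g n) →
        (∀ n : ℕ, ¬Squarefree n → g n = 0) →
        (∀ n : ℕ, 0 < n → (∀ p : ℕ, p.Prime → p ∣ n → p ≤ N) →
          ‖g n‖ ≤ dR (κ + 1) n) →
        (∀ p : ℕ, p.Prime → (p : ℝ) ≤ C → g p = 0) →
        Squarefree q → q < N →
        (∀ p : ℕ, p.Prime → p ∣ q → C < (p : ℝ)) →
        (∑ p ∈ q.primeFactors, Real.log p ^ (A₁ + 1) / (p : ℝ) ^ ((3 : ℝ) / 4)) ≤ D →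
        (c₁ ≤ ‖(∏ p ∈ q.primeFactors, (1 + g p / (p : ℂ)))⁻¹‖ ∧
          ‖(∏ p ∈ q.primeFactors, (1 + g p / (p : ℂ)))⁻¹‖ ≤ c₂ ∧
          c₁ ≤ ∏ p ∈ q.primeFactors, (1 + ‖g p‖ / (p : ℝ)) ∧
          (∏ p ∈ q.primeFactors, (1 + ‖g p‖ / (p : ℝ))) ≤ c₂)) := by
  have hκ0 : (0:ℝ) ≤ κ := by linarith
  set m : ℕ := ⌊κ⌋₊ + 2 with hm_def
  have hmR : (m:ℝ) = (⌊κ⌋₊ : ℝ) + 2 := by push_cast [hm_def]; ring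
  have hm_gt : κ + 1 < (m:ℝ) := by
    have := Nat.lt_floor_add_one κ
    rw [hmR]; linarith
  have hm0 : (0:ℝ) < m := by linarith
  set δ : ℝ := 1 - (κ + 1) / (m:ℝ) with hδ_def
  have hδ0 : 0 < δ := by
    have : (κ + 1) / (m:ℝ) < 1 := (div_lt_one hm0).mpr hm_gt
    simp only [hδ_def]; linarith
  have hA : 0 ≤ (κ+1)*D/δ := by positivity
  have hB : 0 ≤ (κ+1)*D := by positivity
  refine ⟨Real.exp (-((κ+1)*D/δ + (κ+1)*D)), Real.exp ((κ+1)*D/δ + (κ+1)*D),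
    Real.exp_pos _, Real.exp_pos _, ?_⟩
  intro C hκC N g q h1 h2 h3 h4 h5 hsq hqN h9 h10
  set s := q.primeFactors with hs_def
  -- per-prime facts
  have hfacts : ∀ p ∈ s, (3:ℕ) ≤ p ∧ (m:ℝ) ≤ (p:ℝ) ∧ ‖g p‖ ≤ κ + 1 := by
    intro p hp
    obtain ⟨hpp, hdvd, hq0⟩ := Nat.mem_primeFactors.mp hp
    have hCp : C < (p:ℝ) := h9 p hpp hdvd
    have hgt : κ + 1 < (p:ℝ) := lt_trans hκC hCp
    have hp3 : (3:ℕ) ≤ p := by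
      have h2p : (2:ℝ) < (p:ℝ) := by linarith
      have : (2:ℕ) < p := by exact_mod_cast h2p
      omega
    have hmp : (m:ℝ) ≤ (p:ℝ) := by
      have hfl : (⌊κ⌋₊ : ℝ) ≤ κ := Nat.floor_le hκ0
      have : ((⌊κ⌋₊ + 1 : ℕ) : ℝ) < (p:ℝ) := by push_cast; linarith
      have hnat : ⌊κ⌋₊ + 1 < p := by exact_mod_cast this
      have : m ≤ p := by omega
      exact_mod_cast this
    exact ⟨hp3, hmp, gp_le h4 hqN p hp⟩
  -- x p bounds
  have hx0 : ∀ p ∈ s, (0:ℝ) ≤ (κ+1)/(p:ℝ) := by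
    intro p hp; have := (hfacts p hp).1; positivity
  have hxδ : ∀ p ∈ s, (κ+1)/(p:ℝ) ≤ 1 - δ := by
    intro p hp
    obtain ⟨hp3, hmp, -⟩ := hfacts p hp
    have : (κ+1)/(p:ℝ) ≤ (κ+1)/(m:ℝ) := by gcongr
    simp only [hδ_def]; linarith
  -- sum bound
  have hsum : ∑ p ∈ s, (κ+1)/(p:ℝ) ≤ (κ+1)*D := by
    calc ∑ p ∈ s, (κ+1)/(p:ℝ) = (κ+1) * ∑ p ∈ s, ((p:ℝ))⁻¹ := by
          rw [Finset.mul_sum]; exact Finset.sum_congr rfl fun p _ => div_eq_mul_inv _ _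
      _ ≤ (κ+1) * D := by
          apply mul_le_mul_of_nonneg_left _ (by linarith)
          refine le_trans (Finset.sum_le_sum fun p hp => inv_le_logterm hA₁pos (hfacts p hp).1) h10
  -- factor norm bounds
  have hw : ∀ p ∈ s, ‖g p / (p:ℂ)‖ ≤ (κ+1)/(p:ℝ) := by
    intro p hp
    rw [norm_div, Complex.norm_natCast]
    have hp0 : (0:ℝ) < p := by have := (hfacts p hp).1; positivity
    gcongr
    exact (hfacts p hp).2.2
  have hfac_lb : ∀ p ∈ s, Real.exp (-((κ+1)/(p:ℝ)/δ)) ≤ ‖1 + g p / (p:ℂ)‖ := by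
    intro p hp
    have := norm_one_add_ge (w := g p / (p:ℂ))
    have h1s := one_sub_ge hδ0 (hx0 p hp) (hxδ p hp)
    have := hw p hp
    linarith
  have hfac_ub : ∀ p ∈ s, ‖1 + g p / (p:ℂ)‖ ≤ 1 + (κ+1)/(p:ℝ) := by
    intro p hp
    calc ‖1 + g p / (p:ℂ)‖ ≤ ‖(1:ℂ)‖ + ‖g p / (p:ℂ)‖ := norm_add_le _ _
      _ ≤ 1 + (κ+1)/(p:ℝ) := by rw [norm_one]; linarith [hw p hp]
  set P : ℂ := ∏ p ∈ s, (1 + g p / (p:ℂ)) with hP_def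
  have hPnorm : ‖P‖ = ∏ p ∈ s, ‖1 + g p / (p:ℂ)‖ := norm_prod _ _
  have hub : ‖P‖ ≤ Real.exp ((κ+1)*D) := by
    rw [hPnorm]
    calc ∏ p ∈ s, ‖1 + g p / (p:ℂ)‖ ≤ ∏ p ∈ s, (1 + (κ+1)/(p:ℝ)) :=
          Finset.prod_le_prod (fun p _ => norm_nonneg _) hfac_ub
      _ ≤ Real.exp (∑ p ∈ s, (κ+1)/(p:ℝ)) := prod_one_add_le_exp s _ hx0
      _ ≤ Real.exp ((κ+1)*D) := Real.exp_le_exp.2 hsum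
  have hlb : Real.exp (-((κ+1)*D/δ)) ≤ ‖P‖ := by
    rw [hPnorm]
    calc Real.exp (-((κ+1)*D/δ)) ≤ Real.exp (∑ p ∈ s, -((κ+1)/(p:ℝ)/δ)) := by
          apply Real.exp_le_exp.2
          have hsd : ∑ p ∈ s, -((κ+1)/(p:ℝ)/δ) = -((∑ p ∈ s, (κ+1)/(p:ℝ))/δ) := by
            rw [Finset.sum_div, ← Finset.sum_neg_distrib]
          rw [hsd]
          apply neg_le_neg
          gcongr
      _ = ∏ p ∈ s, Real.exp (-((κ+1)/(p:ℝ)/δ)) := Real.exp_sum _ _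
      _ ≤ ∏ p ∈ s, ‖1 + g p / (p:ℂ)‖ :=
          Finset.prod_le_prod (fun p _ => (Real.exp_pos _).le) hfac_lb
  have hPpos : 0 < ‖P‖ := lt_of_lt_of_le (Real.exp_pos _) hlb
  have habs : ‖P⁻¹‖ = ‖P‖⁻¹ := by rw [norm_inv]
  refine ⟨?_, ?_, ?_, ?_⟩
  · rw [habs]
    calc Real.exp (-((κ+1)*D/δ + (κ+1)*D)) ≤ Real.exp (-((κ+1)*D)) := by
          apply Real.exp_le_exp.2; linarith
      _ = (Real.exp ((κ+1)*D))⁻¹ := Real.exp_neg _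
      _ ≤ ‖P‖⁻¹ := inv_anti₀ hPpos hub
  · rw [habs]
    calc ‖P‖⁻¹ ≤ (Real.exp (-((κ+1)*D/δ)))⁻¹ := inv_anti₀ (Real.exp_pos _) hlb
      _ = Real.exp ((κ+1)*D/δ) := by rw [Real.exp_neg, inv_inv]
      _ ≤ Real.exp ((κ+1)*D/δ + (κ+1)*D) := Real.exp_le_exp.2 (by linarith)
  · calc Real.exp (-((κ+1)*D/δ + (κ+1)*D)) ≤ 1 := Real.exp_le_one_iff.mpr (by linarith)
      _ = ∏ _p ∈ s, (1:ℝ) := by simp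
      _ ≤ ∏ p ∈ s, (1 + ‖g p‖ / (p:ℝ)) := by
          apply Finset.prod_le_prod (fun _ _ => zero_le_one)
          intro p hp
          have hp0 : (0:ℝ) < p := by have := (hfacts p hp).1; positivity
          have : 0 ≤ ‖g p‖ / (p:ℝ) := by positivity
          linarith
  · calc ∏ p ∈ s, (1 + ‖g p‖ / (p:ℝ)) ≤ ∏ p ∈ s, (1 + (κ+1)/(p:ℝ)) := by
          apply Finset.prod_le_prod
          · intro p hp
            have hp0 : (0:ℝ) < p := by have := (hfacts p hp).1; positivity
            have : 0 ≤ ‖g p‖ / (p:ℝ) := by positivity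
            linarith
          · intro p hp
            have hp0 : (0:ℝ) < p := by have := (hfacts p hp).1; positivity
            have h' : ‖g p‖ / (p:ℝ) ≤ (κ+1)/(p:ℝ) := by
              gcongr
              exact (hfacts p hp).2.2
            linarith
      _ ≤ Real.exp (∑ p ∈ s, (κ+1)/(p:ℝ)) := prod_one_add_le_exp s _ hx0
      _ ≤ Real.exp ((κ+1)*D/δ + (κ+1)*D) := Real.exp_le_exp.2 (by
          have := hsum
          linarith)


lemma partA_core (κ A₁ D : ℝ) (hκ : 1 < κ) (hA₁pos : 0 < A₁) (hD : 0 < D) :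
    ∀ h : ℕ, 1 ≤ h →
      ∃ C₀ C' : ℝ, 0 < C' ∧ ∀ C : ℝ, C₀ ≤ C → κ + 1 < C →
        ∀ (N : ℕ) (g : ℕ → ℂ) (q : ℕ),
          g 1 = 1 →
          (∀ m n : ℕ, Nat.Coprime m n → g (m * n) = g m * g n) →
          (∀ n : ℕ, ¬Squarefree n → g n = 0) →
          (∀ n : ℕ, 0 < n → (∀ p : ℕ, p.Prime → p ∣ n → p ≤ N) →
            ‖g n‖ ≤ dR (κ + 1) n) →
          (∀ p : ℕ, p.Prime → (p : ℝ) ≤ C → g p = 0) →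
          Squarefree q → q < N →
          (∀ p : ℕ, p.Prime → p ∣ q → C < (p : ℝ)) →
          (∑ p ∈ q.primeFactors, Real.log p ^ (A₁ + 1) / (p : ℝ) ^ ((3 : ℝ) / 4)) ≤ D →
          max
              (‖iteratedDeriv h
                (fun z : ℂ => (∏ p ∈ q.primeFactors, (1 + g p / (p : ℂ) ^ z))⁻¹) 1‖)
              (‖iteratedDeriv h
                (fun z : ℂ => ∏ p ∈ q.primeFactors,
                  (1 + (‖g p‖ : ℂ) / (p : ℂ) ^ z)) 1‖)
            ≤ C' * C ^ (-(1 : ℝ) / 5) := by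
  intro h hh
  refine ⟨Real.exp 1 + (2*(κ+1))^2,
    h.factorial * 40 ^ h * (2*(κ+1)*D) * Real.exp (2*(κ+1)*D), by positivity, ?_⟩
  intro C hC₀ hκC N g q h1 h2 h3 h4 h5 hsq hqN h9 h10
  have hsq2 : (0:ℝ) ≤ (2*(κ+1))^2 := sq_nonneg _
  have hCe : Real.exp 1 ≤ C := by linarith
  have hC1 : (1:ℝ) ≤ C := by linarith [Real.add_one_le_exp (1:ℝ)]
  have hC0 : (0:ℝ) < C := by linarith
  have hCsq : (2*(κ+1))^2 ≤ C := by linarith [Real.exp_pos (1:ℝ)]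
  set s := q.primeFactors with hs_def
  set u₀ : ℕ → ℝ := fun p => (κ+1) * (p:ℝ) ^ (-(39:ℝ)/40) with hu₀_def
  have hκ1 : (0:ℝ) < κ + 1 := by linarith
  -- per-prime facts
  have hpfact : ∀ p ∈ s, (3:ℕ) ≤ p ∧ C < (p:ℝ) ∧ ‖g p‖ ≤ κ + 1 := by
    intro p hp
    obtain ⟨hpp, hdvd, hq0⟩ := Nat.mem_primeFactors.mp hp
    have hCp : C < (p:ℝ) := h9 p hpp hdvd
    have hgt : κ + 1 < (p:ℝ) := lt_trans hκC hCp
    have hp3 : (3:ℕ) ≤ p := by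
      have h2p : (2:ℝ) < (p:ℝ) := by linarith
      have : (2:ℕ) < p := by exact_mod_cast h2p
      omega
    exact ⟨hp3, hCp, gp_le h4 hqN p hp⟩
  have hu₀nn : ∀ p ∈ s, 0 ≤ u₀ p := by
    intro p hp
    have hp0 : (0:ℝ) < p := by have := (hpfact p hp).1; positivity
    simp only [hu₀_def]
    positivity
  -- u₀ ≤ 1/2
  have hsqrt : 2*(κ+1) ≤ C ^ ((1:ℝ)/2) := by
    have h1 : ((2*(κ+1))^2 : ℝ) ^ ((1:ℝ)/2) ≤ C ^ ((1:ℝ)/2) :=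
      Real.rpow_le_rpow hsq2 hCsq (by norm_num)
    have h2 : ((2*(κ+1))^2 : ℝ) ^ ((1:ℝ)/2) = 2*(κ+1) := by
      rw [← Real.rpow_natCast (2*(κ+1)) 2, ← Real.rpow_mul (by positivity)]
      norm_num
    linarith
  have huhalf : ∀ p ∈ s, u₀ p ≤ 1/2 := by
    intro p hp
    have hp0 : (0:ℝ) < p := by have := (hpfact p hp).1; positivity
    have hCp := (hpfact p hp).2.1
    have hr1 : (p:ℝ) ^ (-(39:ℝ)/40) ≤ C ^ (-(39:ℝ)/40) :=
      Real.rpow_le_rpow_of_nonpos hC0 hCp.le (by norm_num)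
    have hr2 : C ^ (-(39:ℝ)/40) ≤ C ^ (-((1:ℝ)/2)) :=
      Real.rpow_le_rpow_of_exponent_le hC1 (by norm_num)
    have hr3 : C ^ (-((1:ℝ)/2)) = (C ^ ((1:ℝ)/2))⁻¹ := Real.rpow_neg hC0.le _
    have ht : (0:ℝ) < C ^ ((1:ℝ)/2) := Real.rpow_pos_of_pos hC0 _
    have ht' : C ^ ((1:ℝ)/2) * (C ^ ((1:ℝ)/2))⁻¹ = 1 := mul_inv_cancel₀ ht.ne'
    have hfin : (κ+1) * (C ^ ((1:ℝ)/2))⁻¹ ≤ 1/2 := by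
      have hinv : (0:ℝ) ≤ (C ^ ((1:ℝ)/2))⁻¹ := by positivity
      nlinarith
    calc u₀ p ≤ (κ+1) * (C ^ ((1:ℝ)/2))⁻¹ := by
          simp only [hu₀_def]
          apply mul_le_mul_of_nonneg_left _ hκ1.le
          rw [← hr3]; exact le_trans hr1 hr2
      _ ≤ 1/2 := hfin
  -- key bound for factors
  have hkey : ∀ p ∈ s, ∀ z ∈ Metric.closedBall (1:ℂ) ((1:ℝ)/40),
      ∀ a : ℂ, ‖a‖ ≤ κ + 1 → ‖a / (p:ℂ) ^ z‖ ≤ u₀ p := by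
    intro p hp z hz a ha
    have hp3 := (hpfact p hp).1
    have hp0 : (0:ℝ) < p := by positivity
    have hp1 : (1:ℝ) ≤ p := by exact_mod_cast le_trans (by norm_num) hp3
    have hre : (39:ℝ)/40 ≤ z.re := by
      have hd : ‖z - 1‖ ≤ 1/40 := by
        rw [← Complex.dist_eq]; exact Metric.mem_closedBall.mp hz
      have h1' := Complex.abs_re_le_norm (z - 1)
      have h2' : |z.re - 1| ≤ 1/40 := by
        simp only [Complex.sub_re, Complex.one_re] at h1'
        linarith
      have := abs_le.mp h2'
      linarith [this.1]
    have hnorm : ‖(p:ℂ) ^ z‖ = (p:ℝ) ^ z.re := by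
      rw [show ((p:ℕ):ℂ) = (((p:ℕ):ℝ):ℂ) by push_cast; rfl,
        Complex.norm_cpow_eq_rpow_re_of_pos hp0]
    have hlbp : (p:ℝ) ^ ((39:ℝ)/40) ≤ (p:ℝ) ^ z.re :=
      Real.rpow_le_rpow_of_exponent_le hp1 hre
    have hppos : (0:ℝ) < (p:ℝ) ^ ((39:ℝ)/40) := Real.rpow_pos_of_pos hp0 _
    rw [norm_div, hnorm]
    have hinv : (p:ℝ) ^ (-(39:ℝ)/40) = ((p:ℝ) ^ ((39:ℝ)/40))⁻¹ := by
      rw [← Real.rpow_neg hp0.le]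
      norm_num
    calc ‖a‖ / (p:ℝ) ^ z.re ≤ (κ+1) / (p:ℝ) ^ ((39:ℝ)/40) := by
          apply div_le_div₀ hκ1.le _ hppos hlbp
          exact ha
      _ = u₀ p := by simp only [hu₀_def]; rw [hinv, div_eq_mul_inv]
  -- sum bound
  set S : ℝ := 2*(κ+1)*D*C ^ (-(9:ℝ)/40) with hS_def
  have hS0 : 0 ≤ S := by simp only [hS_def]; positivity
  have hsumA : ∑ p ∈ s, 2 * u₀ p ≤ S := by
    calc ∑ p ∈ s, 2 * u₀ p
        ≤ ∑ p ∈ s, 2*(κ+1) * (C ^ (-(9:ℝ)/40) * (Real.log p ^ (A₁+1) / (p:ℝ) ^ ((3:ℝ)/4))) := by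
          apply Finset.sum_le_sum
          intro p hp
          obtain ⟨hp3, hCp, -⟩ := hpfact p hp
          have := rpow_le_logterm hA₁pos hC0 hp3 hCp
          simp only [hu₀_def]
          nlinarith [this]
      _ = 2*(κ+1)*C ^ (-(9:ℝ)/40) * ∑ p ∈ s, (Real.log p ^ (A₁+1) / (p:ℝ) ^ ((3:ℝ)/4)) := by
          rw [Finset.mul_sum]
          exact Finset.sum_congr rfl fun p _ => by ring
      _ ≤ 2*(κ+1)*C ^ (-(9:ℝ)/40) * D := by
          apply mul_le_mul_of_nonneg_left h10 (by positivity)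
      _ = S := by simp only [hS_def]; ring
  -- differentiability and nonvanishing facts
  have hcpow_diff : ∀ p ∈ s, Differentiable ℂ (fun z : ℂ => (p:ℂ) ^ z) := by
    intro p hp
    have hp3 := (hpfact p hp).1
    have hpne : ((p:ℕ):ℂ) ≠ 0 := by
      simp only [ne_eq, Nat.cast_eq_zero]; omega
    exact fun z => differentiableAt_id.const_cpow (Or.inl hpne)
  have hcpow_ne : ∀ p ∈ s, ∀ z : ℂ, (p:ℂ) ^ z ≠ 0 := by
    intro p hp z
    have hp3 := (hpfact p hp).1
    have hpne : ((p:ℕ):ℂ) ≠ 0 := by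
      simp only [ne_eq, Nat.cast_eq_zero]; omega
    rw [Complex.cpow_def_of_ne_zero hpne]
    exact Complex.exp_ne_zero _
  have hinner_diff : ∀ p ∈ s,
      DifferentiableOn ℂ (fun z : ℂ => 1 + g p / (p:ℂ) ^ z) (Metric.closedBall 1 ((1:ℝ)/40)) := by
    intro p hp
    apply DifferentiableOn.const_add
    exact DifferentiableOn.div (differentiableOn_const _)
      ((hcpow_diff p hp).differentiableOn) (fun z _ => hcpow_ne p hp z)
  have hfac_ne : ∀ p ∈ s, ∀ z ∈ Metric.closedBall (1:ℂ) ((1:ℝ)/40),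
      (1:ℝ)/2 ≤ ‖1 + g p / (p:ℂ) ^ z‖ := by
    intro p hp z hz
    have hw := hkey p hp z hz (g p) (hpfact p hp).2.2
    have := norm_one_add_ge (w := g p / (p:ℂ) ^ z)
    have := huhalf p hp
    linarith
  -- first function (inverse)
  have hbound₁ : ∀ p ∈ s, ∀ z ∈ Metric.closedBall (1:ℂ) ((1:ℝ)/40),
      ‖(fun z : ℂ => (1 + g p / (p:ℂ) ^ z)⁻¹) z - 1‖ ≤ 2 * u₀ p := by
    intro p hp z hz
    have hw := hkey p hp z hz (g p) (hpfact p hp).2.2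
    have hne2 := hfac_ne p hp z hz
    have hne : (1 + g p / (p:ℂ) ^ z) ≠ 0 := by
      intro hc
      rw [hc] at hne2
      simp at hne2
      linarith
    have heq : (1 + g p / (p:ℂ) ^ z)⁻¹ - 1 = -(g p / (p:ℂ) ^ z) / (1 + g p / (p:ℂ) ^ z) := by
      field_simp
      ring
    simp only [heq]
    rw [norm_div, norm_neg]
    calc ‖g p / (p:ℂ) ^ z‖ / ‖1 + g p / (p:ℂ) ^ z‖ ≤ u₀ p / (1/2) := by
          apply div_le_div₀ (hu₀nn p hp) hw (by norm_num) hne2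
      _ = 2 * u₀ p := by ring
  have hdiff₁ : ∀ p ∈ s, DifferentiableOn ℂ (fun z : ℂ => (1 + g p / (p:ℂ) ^ z)⁻¹)
      (Metric.closedBall 1 ((1:ℝ)/40)) := by
    intro p hp
    apply DifferentiableOn.inv (hinner_diff p hp)
    intro z hz
    intro hc
    have := hfac_ne p hp z hz
    rw [hc] at this
    simp at this
    linarith
  have hH := deriv_prod_bound hh hdiff₁ hbound₁ hsumA hS0
  -- second function
  have hbound₂ : ∀ p ∈ s, ∀ z ∈ Metric.closedBall (1:ℂ) ((1:ℝ)/40),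
      ‖(fun z : ℂ => 1 + (‖g p‖ : ℂ) / (p:ℂ) ^ z) z - 1‖ ≤ 2 * u₀ p := by
    intro p hp z hz
    simp only [add_sub_cancel_left]
    have ha : ‖(‖g p‖ : ℂ)‖ ≤ κ + 1 := by
      rw [Complex.norm_real, norm_norm]
      exact (hpfact p hp).2.2
    have := hkey p hp z hz _ ha
    have := hu₀nn p hp
    linarith
  have hdiff₂ : ∀ p ∈ s, DifferentiableOn ℂ
      (fun z : ℂ => 1 + (‖g p‖ : ℂ) / (p:ℂ) ^ z)
      (Metric.closedBall 1 ((1:ℝ)/40)) := by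
    intro p hp
    apply DifferentiableOn.const_add
    exact DifferentiableOn.div (differentiableOn_const _)
      ((hcpow_diff p hp).differentiableOn) (fun z _ => hcpow_ne p hp z)
  have hG := deriv_prod_bound hh hdiff₂ hbound₂ hsumA hS0
  -- final chain
  have hSle : S ≤ 2*(κ+1)*D := by
    have hle1 : C ^ (-(9:ℝ)/40) ≤ 1 := Real.rpow_le_one_of_one_le_of_nonpos hC1 (by norm_num)
    calc S = 2*(κ+1)*D * C ^ (-(9:ℝ)/40) := hS_def
      _ ≤ 2*(κ+1)*D * 1 := mul_le_mul_of_nonneg_left hle1 (by positivity)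
      _ = 2*(κ+1)*D := by ring
  have hCpow : C ^ (-(9:ℝ)/40) ≤ C ^ (-(1:ℝ)/5) :=
    Real.rpow_le_rpow_of_exponent_le hC1 (by norm_num)
  have hfin : (h.factorial : ℝ) * 40 ^ h * (S * Real.exp S)
      ≤ h.factorial * 40 ^ h * (2*(κ+1)*D) * Real.exp (2*(κ+1)*D) * C ^ (-(1:ℝ)/5) := by
    have hSle2 : S ≤ 2*(κ+1)*D * C ^ (-(1:ℝ)/5) := by
      calc S = 2*(κ+1)*D * C ^ (-(9:ℝ)/40) := hS_def
        _ ≤ 2*(κ+1)*D * C ^ (-(1:ℝ)/5) := mul_le_mul_of_nonneg_left hCpow (by positivity)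
    have hexp : Real.exp S ≤ Real.exp (2*(κ+1)*D) := Real.exp_le_exp.2 hSle
    have h1' : S * Real.exp S ≤ (2*(κ+1)*D * C ^ (-(1:ℝ)/5)) * Real.exp (2*(κ+1)*D) :=
      mul_le_mul hSle2 hexp (Real.exp_pos _).le (by positivity)
    calc (h.factorial : ℝ) * 40 ^ h * (S * Real.exp S)
        ≤ (h.factorial : ℝ) * 40 ^ h * ((2*(κ+1)*D * C ^ (-(1:ℝ)/5)) * Real.exp (2*(κ+1)*D)) :=
          mul_le_mul_of_nonneg_left h1' (by positivity)
      _ = h.factorial * 40 ^ h * (2*(κ+1)*D) * Real.exp (2*(κ+1)*D) * C ^ (-(1:ℝ)/5) := by ring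
  apply max_le
  · have hfun : (fun z : ℂ => (∏ p ∈ s, (1 + g p / (p:ℂ) ^ z))⁻¹)
        = fun z : ℂ => ∏ p ∈ s, (1 + g p / (p:ℂ) ^ z)⁻¹ :=
      funext fun z => (Finset.prod_inv_distrib _).symm
    rw [hfun]
    exact le_trans hH hfin
  · exact le_trans hG hfin


/-- Bounds for the derivatives at `z = 1` of `H_q(z)⁻¹ = ∏_{p ∣ q}(1 + g(p)/p^z)⁻¹` and of
`G̃_q(z) = ∏_{p ∣ q}(1 + |g(p)|/p^z)`: all `h`-th derivatives (`h ≥ 1`) are `≤ C' C^{−1/5}`,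
and the values at `z = 1` are bounded above and below by constants depending on `κ, D`. -/
theorem euler_product_derivative_bounds (κ A₁ D : ℝ)
    (hκ : 1 < κ) (hA₁pos : 0 < A₁) (hD : 0 < D) :
    (∀ h : ℕ, 1 ≤ h →
      ∃ C₀ C' : ℝ, 0 < C' ∧ ∀ C : ℝ, C₀ ≤ C → κ + 1 < C →
        ∀ (N : ℕ) (g : ℕ → ℂ) (q : ℕ),
          g 1 = 1 →
          (∀ m n : ℕ, Nat.Coprime m n → g (m * n) = g m * g n) →
          (∀ n : ℕ, ¬Squarefree n → g n = 0) →
          (∀ n : ℕ, 0 < n → (∀ p : ℕ, p.Prime → p ∣ n → p ≤ N) →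
            ‖g n‖ ≤ dR (κ + 1) n) →
          (∀ p : ℕ, p.Prime → (p : ℝ) ≤ C → g p = 0) →
          Squarefree q → q < N →
          (∀ p : ℕ, p.Prime → p ∣ q → C < (p : ℝ)) →
          (∑ p ∈ q.primeFactors, Real.log p ^ (A₁ + 1) / (p : ℝ) ^ ((3 : ℝ) / 4)) ≤ D →
          max
              (‖iteratedDeriv h
                (fun z : ℂ => (∏ p ∈ q.primeFactors, (1 + g p / (p : ℂ) ^ z))⁻¹) 1‖)
              (‖iteratedDeriv h
                (fun z : ℂ => ∏ p ∈ q.primeFactors,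
                  (1 + (‖g p‖ : ℂ) / (p : ℂ) ^ z)) 1‖)
            ≤ C' * C ^ (-(1 : ℝ) / 5)) ∧
    (∃ c₁ c₂ : ℝ, 0 < c₁ ∧ 0 < c₂ ∧ ∀ C : ℝ, κ + 1 < C →
      ∀ (N : ℕ) (g : ℕ → ℂ) (q : ℕ),
        g 1 = 1 →
        (∀ m n : ℕ, Nat.Coprime m n → g (m * n) = g m * g n) →
        (∀ n : ℕ, ¬Squarefree n → g n = 0) →
        (∀ n : ℕ, 0 < n → (∀ p : ℕ, p.Prime → p ∣ n → p ≤ N) →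
          ‖g n‖ ≤ dR (κ + 1) n) →
        (∀ p : ℕ, p.Prime → (p : ℝ) ≤ C → g p = 0) →
        Squarefree q → q < N →
        (∀ p : ℕ, p.Prime → p ∣ q → C < (p : ℝ)) →
        (∑ p ∈ q.primeFactors, Real.log p ^ (A₁ + 1) / (p : ℝ) ^ ((3 : ℝ) / 4)) ≤ D →
        (c₁ ≤ ‖(∏ p ∈ q.primeFactors, (1 + g p / (p : ℂ)))⁻¹‖ ∧
          ‖(∏ p ∈ q.primeFactors, (1 + g p / (p : ℂ)))⁻¹‖ ≤ c₂ ∧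
          c₁ ≤ ∏ p ∈ q.primeFactors, (1 + ‖g p‖ / (p : ℝ)) ∧
          (∏ p ∈ q.primeFactors, (1 + ‖g p‖ / (p : ℝ))) ≤ c₂)) := by
  exact ⟨partA_core κ A₁ D hκ hA₁pos hD, partB_core κ A₁ D hκ hA₁pos hD⟩
end

section
/- Let κ > 1, A₁ > 0, D > 0. Then for every positive integer q with Σ_{p | q} (log p)^{A₁+1}/p^{3/4} ≤ D (sum over primes dividing q): Σ_{b ≥ 1, every prime factor of b divides q} d_κ(b)·gcd(q,b)/b^{3/4} ≤ C q^{1/4} d_{κ+1}(q) and Σ_{b ≥ 1, every prime factor of b divides q} d_κ(b)·gcd(q,b)/b ≤ C d_{κ+1}(q), where C depends only on κ, A₁ and D. -/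
open Finset
open scoped Classical

noncomputable def Ak (κ : ℝ) (k : ℕ) : ℝ :=
  (∏ i ∈ Finset.range k, (κ + (i : ℝ))) / (Nat.factorial k : ℝ)

lemma Ak_zero (κ : ℝ) : Ak κ 0 = 1 := by simp [Ak]

lemma Ak_succ (κ : ℝ) (k : ℕ) : Ak κ (k + 1) = Ak κ k * ((κ + k) / (k + 1)) := by
  have hk : (Nat.factorial k : ℝ) ≠ 0 := Nat.cast_ne_zero.2 (Nat.factorial_ne_zero k)
  simp only [Ak, prod_range_succ, Nat.factorial_succ, Nat.cast_mul, Nat.cast_add, Nat.cast_one,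
    div_mul_div_comm]
  ring

lemma Ak_pos {κ : ℝ} (hκ : 0 < κ) (k : ℕ) : 0 < Ak κ k := by
  apply div_pos
  · exact Finset.prod_pos fun i _ => by positivity
  · exact_mod_cast Nat.factorial_pos k

lemma one_le_Ak {κ : ℝ} (hκ : 1 ≤ κ) (k : ℕ) : 1 ≤ Ak κ k := by
  induction k with
  | zero => simp [Ak_zero]
  | succ k ih =>
    rw [Ak_succ]
    have h1 : (1:ℝ) ≤ (κ + k) / (k + 1) := by
      rw [le_div_iff₀ (by positivity)]
      linarith
    nlinarith

lemma Ak_le_Ak {κ κ' : ℝ} (hκ : 0 < κ) (h : κ ≤ κ') (k : ℕ) : Ak κ k ≤ Ak κ' k := by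
  rw [Ak, Ak, div_le_div_iff_of_pos_right (by exact_mod_cast Nat.factorial_pos k)]
  exact prod_le_prod (fun i _ => by positivity) (fun i _ => by linarith)


lemma Ak_hockey {κ : ℝ} (hκ : 0 < κ) (v : ℕ) :
    ∑ k ∈ range (v + 1), Ak κ k = Ak (κ + 1) v := by
  induction v with
  | zero => simp [Ak_zero]
  | succ v ih =>
    rw [Finset.sum_range_succ, ih, Ak_succ, Ak_succ]
    have h1 : Ak κ (v + 1) = Ak κ v * ((κ + v) / (v + 1)) := Ak_succ κ v
    -- relation between Ak (κ+1) v and Ak κ v : Ak (κ+1) v * κ = Ak κ v * (κ + v)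
    have key : ∀ w : ℕ, Ak (κ + 1) w * κ = Ak κ w * (κ + w) := by
      intro w
      induction w with
      | zero => simp [Ak_zero]
      | succ w ihw =>
        rw [Ak_succ, Ak_succ]
        push_cast
        have hw : (w : ℝ) + 1 ≠ 0 := by positivity
        field_simp at ihw ⊢
        nlinarith [ihw]
    have hv1 : (0:ℝ) < (v:ℝ) + 1 := by positivity
    have hkey := key v
    have hv : ((v:ℝ)+1) ≠ 0 := by positivity
    field_simp
    linear_combination -hkey

lemma Ak_submult {κ : ℝ} (hκ : 1 ≤ κ) (v j : ℕ) : Ak κ (v + j) ≤ Ak κ v * Ak κ j := by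
  have hκ0 : (0:ℝ) < κ := by linarith
  induction j with
  | zero => simp [Ak_zero]
  | succ j ih =>
    have h1 : Ak κ (v + (j+1)) = Ak κ (v + j) * ((κ + (v+j : ℕ)) / ((v+j : ℕ) + 1)) := by
      rw [← Ak_succ]; norm_num [add_assoc]
    rw [h1, Ak_succ]
    have hr : (κ + ((v:ℝ) + j)) / ((v:ℝ) + j + 1) ≤ (κ + j) / (j + 1) := by
      rw [div_le_div_iff₀ (by positivity) (by positivity)]
      have : (0:ℝ) ≤ (v:ℝ) := Nat.cast_nonneg v
      nlinarith
    have hA := Ak_pos hκ0 (v + j)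
    have hApos := Ak_pos hκ0 v
    have hAj := Ak_pos hκ0 j
    have hrpos : 0 ≤ (κ + ((v:ℝ) + j)) / ((v:ℝ) + j + 1) := by positivity
    push_cast at *
    calc Ak κ (v + j) * ((κ + ((v:ℝ) + j)) / ((v:ℝ) + j + 1))
        ≤ (Ak κ v * Ak κ j) * ((κ + ((v:ℝ) + j)) / ((v:ℝ) + j + 1)) := by
          apply mul_le_mul_of_nonneg_right ih hrpos
      _ ≤ (Ak κ v * Ak κ j) * ((κ + j) / (j + 1)) := by
          apply mul_le_mul_of_nonneg_left hr (by positivity)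
      _ = Ak κ v * (Ak κ j * ((κ + (j:ℝ)) / ((j:ℝ) + 1))) := by ring

lemma summable_Ak_mul_pow {κ x : ℝ} (hκ : 0 < κ) (hx0 : 0 < x) (hx1 : x < 1) :
    Summable (fun n => Ak κ n * x ^ n) := by
  set r : ℝ := (1 + x) / 2 with hr
  have hrx : x < r := by rw [hr]; linarith
  have hr1 : r < 1 := by rw [hr]; linarith
  have hrpos : 0 < r := by rw [hr]; linarith
  apply summable_of_ratio_norm_eventually_le hr1
  rw [Filter.eventually_atTop]
  refine ⟨⌈2 * κ / (1 - x)⌉₊, fun n hn => ?_⟩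
  have hnr : (2 * κ / (1 - x)) ≤ (n : ℝ) := le_trans (Nat.le_ceil _) (Nat.cast_le.2 hn)
  have hxx : (0:ℝ) < 1 - x := by linarith
  have hnx : 2 * κ ≤ (n:ℝ) * (1 - x) := by
    rw [div_le_iff₀ hxx] at hnr; linarith
  have hA := Ak_pos hκ n
  have hratio : (κ + n) / ((n:ℝ) + 1) * x ≤ r := by
    rw [div_mul_eq_mul_div, div_le_iff₀ (by positivity), hr]
    have hn0 : (0:ℝ) ≤ (n:ℝ) := Nat.cast_nonneg n
    nlinarith [mul_le_mul_of_nonneg_left hx1.le hκ.le]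
  have hterm : Ak κ (n+1) * x ^ (n+1) = (Ak κ n * x ^ n) * ((κ + n) / ((n:ℝ) + 1) * x) := by
    rw [Ak_succ, pow_succ]; ring
  rw [Real.norm_eq_abs, Real.norm_eq_abs, abs_of_nonneg (mul_nonneg (Ak_pos hκ _).le (by positivity)), abs_of_nonneg (mul_nonneg (Ak_pos hκ _).le (by positivity)),
    hterm]
  calc (Ak κ n * x ^ n) * ((κ + n) / ((n:ℝ) + 1) * x)
      ≤ (Ak κ n * x ^ n) * r := by
        apply mul_le_mul_of_nonneg_left hratio (by positivity)
    _ = r * (Ak κ n * x ^ n) := by ring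

lemma dR_one (κ : ℝ) : dR κ 1 = 1 := by simp [dR]

lemma dR_prime_pow (κ : ℝ) {p : ℕ} (hp : p.Prime) (k : ℕ) : dR κ (p ^ k) = Ak κ k := by
  rw [dR, hp.factorization_pow]
  rw [Finsupp.prod_single_index (by simp)]
  rfl

lemma dR_mul (κ : ℝ) {m n : ℕ} (h : Nat.Coprime m n) :
    dR κ (m * n) = dR κ m * dR κ n := by
  rcases eq_or_ne m 0 with rfl | hm
  · have : n = 1 := by simpa [Nat.coprime_zero_left] using h
    subst this; simp [dR]
  rcases eq_or_ne n 0 with rfl | hn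
  · have : m = 1 := by simpa [Nat.coprime_zero_right] using h
    subst this; simp [dR]
  rw [dR, Nat.factorization_mul hm hn,
    Finsupp.prod_add_index_of_disjoint ?_ _]
  · rfl
  · rw [Nat.support_factorization, Nat.support_factorization]
    exact Nat.Coprime.disjoint_primeFactors h

lemma dR_eq_prod (κ : ℝ) (q : ℕ) :
    dR κ q = ∏ p ∈ q.primeFactors, Ak κ (q.factorization p) := by
  rw [dR, Finsupp.prod, Nat.support_factorization]
  rfl

/-- The key constant: tail sum of `Ak` against the geometric `2^{-3/4}`. -/
noncomputable def Sk (κ : ℝ) : ℝ := ∑' j : ℕ, Ak κ (j + 1) * ((2:ℝ) ^ (-((3:ℝ)/4))) ^ j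

lemma x0_pos : (0:ℝ) < (2:ℝ) ^ (-((3:ℝ)/4)) := Real.rpow_pos_of_pos (by norm_num) _
lemma x0_lt_one : (2:ℝ) ^ (-((3:ℝ)/4)) < 1 :=
  Real.rpow_lt_one_of_one_lt_of_neg (by norm_num) (by norm_num)

lemma summable_Ak_succ_mul_pow {κ x : ℝ} (hκ : 0 < κ) (hx0 : 0 < x) (hx1 : x < 1) :
    Summable (fun j : ℕ => Ak κ (j + 1) * x ^ j) := by
  have h := (summable_nat_add_iff 1).2 (summable_Ak_mul_pow hκ hx0 hx1)
  have h2 := h.mul_left x⁻¹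
  refine h2.congr fun j => ?_
  field_simp [pow_succ]
  ring

lemma Sk_nonneg {κ : ℝ} (hκ : 0 < κ) : 0 ≤ Sk κ :=
  tsum_nonneg fun j => mul_nonneg (Ak_pos hκ _).le (pow_nonneg x0_pos.le _)

lemma gcd_prime_pow_le {q p : ℕ} (hq : q ≠ 0) (hp : p.Prime) (n : ℕ) :
    Nat.gcd q (p ^ n) ≤ p ^ (min n (q.factorization p)) := by
  obtain ⟨m, hmn, hm⟩ := (Nat.dvd_prime_pow hp).1 (Nat.gcd_dvd_right q (p ^ n))
  have hmq : p ^ m ∣ q := hm ▸ Nat.gcd_dvd_left q (p ^ n)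
  have hmv : m ≤ q.factorization p := (Nat.Prime.pow_dvd_iff_le_factorization hp hq).1 hmq
  rw [hm]
  exact Nat.pow_le_pow_right hp.pos (le_min hmn hmv)

lemma local_bound (κ s : ℝ) (hκ : 1 < κ) (hs : 3/4 ≤ s) (hs1 : s ≤ 1)
    {q p : ℕ} (hq : q ≠ 0) (hp : p.Prime) :
    Summable (fun n : ℕ => dR κ (p ^ n) * (Nat.gcd q (p ^ n) : ℝ) / ((p ^ n : ℕ) : ℝ) ^ s) ∧
    (∑' n : ℕ, dR κ (p ^ n) * (Nat.gcd q (p ^ n) : ℝ) / ((p ^ n : ℕ) : ℝ) ^ s)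
      ≤ (((p : ℝ) ^ (q.factorization p : ℕ)) ^ (1 - s)) * Ak (κ + 1) (q.factorization p)
        * (1 + Sk κ * (p : ℝ) ^ (-((3:ℝ)/4))) := by
  have hκ0 : (0:ℝ) < κ := by linarith
  have hp1 : (1:ℝ) < (p:ℝ) := by exact_mod_cast hp.one_lt
  have hp0 : (0:ℝ) < (p:ℝ) := by linarith
  set v := q.factorization p with hv
  set u : ℝ := (p:ℝ) ^ (-s) with hu
  have hu0 : 0 < u := Real.rpow_pos_of_pos hp0 _
  have hu1 : u < 1 := Real.rpow_lt_one_of_one_lt_of_neg hp1 (by linarith)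
  -- the function in nice monomial form
  have hf_eq : ∀ n : ℕ, dR κ (p ^ n) * (Nat.gcd q (p ^ n) : ℝ) / ((p ^ n : ℕ) : ℝ) ^ s
      = Ak κ n * (Nat.gcd q (p ^ n) : ℝ) * u ^ n := by
    intro n
    rw [dR_prime_pow κ hp, div_eq_mul_inv]
    congr 1
    have hcast : ((p ^ n : ℕ) : ℝ) = (p:ℝ) ^ (n:ℝ) := by push_cast; rw [Real.rpow_natCast]
    rw [hu, hcast, ← Real.rpow_natCast ((p:ℝ) ^ (-s)) n, ← Real.rpow_mul hp0.le,
      ← Real.rpow_mul hp0.le, ← Real.rpow_neg hp0.le]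
    congr 1
    ring
  -- termwise bound by g
  set g : ℕ → ℝ := fun n => Ak κ n * (p:ℝ) ^ (min n v) * u ^ n with hg
  have hfg : ∀ n, dR κ (p ^ n) * (Nat.gcd q (p ^ n) : ℝ) / ((p ^ n : ℕ) : ℝ) ^ s ≤ g n := by
    intro n
    rw [hf_eq n, hg]
    have h1 : (Nat.gcd q (p ^ n) : ℝ) ≤ (p:ℝ) ^ (min n v) := by
      exact_mod_cast Nat.cast_le.2 (gcd_prime_pow_le hq hp n)
    have := Ak_pos hκ0 n
    have := pow_pos hu0 n
    calc Ak κ n * (Nat.gcd q (p ^ n) : ℝ) * u ^ n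
        ≤ Ak κ n * ((p:ℝ) ^ (min n v)) * u ^ n := by
          apply mul_le_mul_of_nonneg_right (mul_le_mul_of_nonneg_left h1 (Ak_pos hκ0 n).le)
            (pow_nonneg hu0.le n)
      _ = _ := rfl
  have hf_nonneg : ∀ n, 0 ≤ dR κ (p ^ n) * (Nat.gcd q (p ^ n) : ℝ) / ((p ^ n : ℕ) : ℝ) ^ s := by
    intro n
    rw [hf_eq n]
    exact mul_nonneg (mul_nonneg (Ak_pos hκ0 n).le (Nat.cast_nonneg _)) (pow_nonneg hu0.le n)
  -- summability of g via comparison with p^v * (Ak n u^n)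
  have hg_le : ∀ n, g n ≤ (p:ℝ) ^ v * (Ak κ n * u ^ n) := by
    intro n
    have h1 : ((p:ℝ)) ^ (min n v) ≤ (p:ℝ) ^ v :=
      pow_le_pow_right₀ hp1.le (min_le_right n v)
    calc g n = Ak κ n * (p:ℝ) ^ (min n v) * u ^ n := rfl
      _ ≤ Ak κ n * (p:ℝ) ^ v * u ^ n := by
          apply mul_le_mul_of_nonneg_right (mul_le_mul_of_nonneg_left h1 (Ak_pos hκ0 n).le)
            (pow_nonneg hu0.le n)
      _ = (p:ℝ) ^ v * (Ak κ n * u ^ n) := by ring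
  have hg_nonneg : ∀ n, 0 ≤ g n := fun n =>
    mul_nonneg (mul_nonneg (Ak_pos hκ0 n).le (by positivity)) (pow_nonneg hu0.le n)
  have hg_summable : Summable g :=
    Summable.of_nonneg_of_le hg_nonneg hg_le ((summable_Ak_mul_pow hκ0 hu0 hu1).mul_left _)
  have hf_summable : Summable (fun n : ℕ => dR κ (p ^ n) * (Nat.gcd q (p ^ n) : ℝ) / ((p ^ n : ℕ) : ℝ) ^ s) :=
    Summable.of_nonneg_of_le hf_nonneg hfg hg_summable
  refine ⟨hf_summable, ?_⟩
  have htsum_le : (∑' n : ℕ, dR κ (p ^ n) * (Nat.gcd q (p ^ n) : ℝ) / ((p ^ n : ℕ) : ℝ) ^ s)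
      ≤ ∑' n, g n := Summable.tsum_le_tsum hfg hf_summable hg_summable
  refine htsum_le.trans ?_
  -- now bound tsum g
  set xp : ℝ := (p:ℝ) ^ (-((3:ℝ)/4)) with hxp
  have hxp0 : 0 < xp := Real.rpow_pos_of_pos hp0 _
  set x0 : ℝ := (2:ℝ) ^ (-((3:ℝ)/4)) with hx0
  have hx00 : 0 < x0 := x0_pos
  have hx01 : x0 < 1 := x0_lt_one
  have huxp : u ≤ xp := Real.rpow_le_rpow_of_exponent_le hp1.le (by linarith)
  have hxpx0 : xp ≤ x0 := by
    have h34 : (2:ℝ) ^ ((3:ℝ)/4) ≤ (p:ℝ) ^ ((3:ℝ)/4) :=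
      Real.rpow_le_rpow (by norm_num) (by exact_mod_cast hp.two_le) (by norm_num)
    rw [hxp, hx0, Real.rpow_neg hp0.le, Real.rpow_neg (by norm_num)]
    exact inv_anti₀ (Real.rpow_pos_of_pos (by norm_num) _) h34
  set w1 : ℝ := (p:ℝ) * u with hw1
  have hw1pos : 0 < w1 := mul_pos hp0 hu0
  have hw1eq : w1 = (p:ℝ) ^ ((1:ℝ) - s) := by
    rw [hw1, hu, sub_eq_add_neg, Real.rpow_add hp0, Real.rpow_one]
  have hw1one : (1:ℝ) ≤ w1 := by
    rw [hw1eq]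
    exact Real.one_le_rpow hp1.le (by linarith)
  -- split the sum
  rw [← Summable.sum_add_tsum_nat_add (v + 1) hg_summable]
  -- part 1
  have hpart1 : ∑ k ∈ range (v + 1), g k ≤ Ak (κ + 1) v * w1 ^ v := by
    have h1 : ∀ k ∈ range (v + 1), g k ≤ Ak κ k * w1 ^ v := by
      intro k hk
      have hkv : k ≤ v := Nat.lt_succ_iff.1 (mem_range.1 hk)
      have : g k = Ak κ k * w1 ^ k := by
        show Ak κ k * (p:ℝ) ^ (min k v) * u ^ k = _
        rw [min_eq_left hkv, hw1, mul_pow]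
        ring
      rw [this]
      exact mul_le_mul_of_nonneg_left (pow_le_pow_right₀ hw1one hkv) (Ak_pos hκ0 k).le
    calc ∑ k ∈ range (v + 1), g k ≤ ∑ k ∈ range (v + 1), Ak κ k * w1 ^ v :=
          Finset.sum_le_sum h1
      _ = (∑ k ∈ range (v + 1), Ak κ k) * w1 ^ v := by rw [← Finset.sum_mul]
      _ = Ak (κ + 1) v * w1 ^ v := by rw [Ak_hockey hκ0]
  -- part 2
  have hgtail_summable : Summable (fun j => g (j + (v + 1))) :=
    (summable_nat_add_iff (v + 1)).2 hg_summable
  have hh2_summable : Summable (fun j : ℕ => (Ak κ v * w1 ^ v * xp) * (Ak κ (j + 1) * x0 ^ j)) :=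
    (summable_Ak_succ_mul_pow hκ0 hx00 hx01).mul_left _
  have hpart2 : (∑' j : ℕ, g (j + (v + 1)))
      ≤ Ak κ v * w1 ^ v * xp * Sk κ := by
    have hterm : ∀ j : ℕ, g (j + (v + 1)) ≤ (Ak κ v * w1 ^ v * xp) * (Ak κ (j + 1) * x0 ^ j) := by
      intro j
      have hmin : min (j + (v + 1)) v = v := min_eq_right (by omega)
      have hidx : j + (v + 1) = v + (j + 1) := by omega
      have hAk : Ak κ (j + (v + 1)) ≤ Ak κ v * Ak κ (j + 1) := by
        rw [hidx]; exact Ak_submult hκ.le v (j + 1)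
      have hAkpos := Ak_pos hκ0 (j + (v + 1))
      have hu_le : u ^ (j + (v + 1)) ≤ u ^ v * (xp * x0 ^ j) := by
        have h1 : u ^ (j + (v + 1)) = u ^ v * (u * u ^ j) := by
          rw [show j + (v + 1) = v + (j + 1) by omega, pow_add, pow_succ']
        rw [h1]
        have h2 : u * u ^ j ≤ xp * x0 ^ j := by
          apply mul_le_mul huxp ?_ (pow_nonneg hu0.le j) hxp0.le
          exact pow_le_pow_left₀ hu0.le (le_trans huxp hxpx0) j
        exact mul_le_mul_of_nonneg_left h2 (pow_nonneg hu0.le v)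
      have hgj : g (j + (v + 1)) = Ak κ (j + (v + 1)) * (p:ℝ) ^ v * u ^ (j + (v + 1)) := by
        show Ak κ (j + (v + 1)) * (p:ℝ) ^ (min (j + (v + 1)) v) * u ^ (j + (v + 1)) = _
        rw [hmin]
      rw [hgj]
      calc Ak κ (j + (v + 1)) * (p:ℝ) ^ v * u ^ (j + (v + 1))
          ≤ (Ak κ v * Ak κ (j + 1)) * (p:ℝ) ^ v * (u ^ v * (xp * x0 ^ j)) := by
            apply mul_le_mul (mul_le_mul_of_nonneg_right hAk (by positivity)) hu_le
              (pow_nonneg hu0.le _) (mul_nonneg (mul_nonneg (Ak_pos hκ0 v).le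
                (Ak_pos hκ0 (j + 1)).le) (by positivity))
        _ = (Ak κ v * w1 ^ v * xp) * (Ak κ (j + 1) * x0 ^ j) := by
            rw [hw1, mul_pow]; ring
    calc (∑' j : ℕ, g (j + (v + 1)))
        ≤ ∑' j : ℕ, (Ak κ v * w1 ^ v * xp) * (Ak κ (j + 1) * x0 ^ j) :=
          Summable.tsum_le_tsum hterm hgtail_summable hh2_summable
      _ = (Ak κ v * w1 ^ v * xp) * ∑' j : ℕ, (Ak κ (j + 1) * x0 ^ j) := tsum_mul_left
      _ = Ak κ v * w1 ^ v * xp * Sk κ := rfl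
  -- combine
  have hAle : Ak κ v ≤ Ak (κ + 1) v := Ak_le_Ak hκ0 (by linarith) v
  have hSk := Sk_nonneg hκ0
  have hcomb : Ak (κ + 1) v * w1 ^ v + Ak κ v * w1 ^ v * xp * Sk κ
      ≤ (((p:ℝ) ^ (v : ℕ)) ^ ((1:ℝ) - s)) * Ak (κ + 1) v * (1 + Sk κ * xp) := by
    have hwv : w1 ^ v = ((p:ℝ) ^ (v : ℕ)) ^ ((1:ℝ) - s) := by
      rw [hw1eq, ← Real.rpow_natCast ((p:ℝ) ^ ((1:ℝ) - s)) v, ← Real.rpow_mul hp0.le,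
        ← Real.rpow_natCast (p:ℝ) v, ← Real.rpow_mul hp0.le]
      congr 1
      ring
    rw [← hwv]
    have h1 : Ak κ v * w1 ^ v * xp * Sk κ ≤ Ak (κ + 1) v * w1 ^ v * xp * Sk κ := by
      apply mul_le_mul_of_nonneg_right (mul_le_mul_of_nonneg_right
        (mul_le_mul_of_nonneg_right hAle (pow_nonneg hw1pos.le v)) hxp0.le) hSk
    nlinarith [pow_nonneg hw1pos.le v, Ak_pos (by linarith : (0:ℝ) < κ + 1) v]
  exact le_trans (add_le_add hpart1 hpart2) hcomb

lemma dR_nonneg {κ : ℝ} (hκ : 0 ≤ κ) (n : ℕ) : 0 ≤ dR κ n := by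
  rw [dR, Finsupp.prod]
  apply Finset.prod_nonneg
  intro p _
  apply div_nonneg (Finset.prod_nonneg fun i _ => by positivity) (Nat.cast_nonneg _)

lemma smooth_sum_le (κ s : ℝ) (hκ : 1 < κ) (hs : 3/4 ≤ s) (hs1 : s ≤ 1)
    (q : ℕ) (hq : 0 < q) (T : ℝ)
    (hT : ∑ p ∈ q.primeFactors, (p : ℝ) ^ (-((3:ℝ)/4)) ≤ T) :
    (∑' b : ℕ, if 1 ≤ b ∧ ∀ p : ℕ, p.Prime → p ∣ b → p ∣ q then
        ENNReal.ofReal (dR κ b * (Nat.gcd q b : ℝ) / (b : ℝ) ^ s) else 0)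
      ≤ ENNReal.ofReal (Real.exp (Sk κ * T) * (q : ℝ) ^ ((1:ℝ) - s) * dR (κ + 1) q) := by
  have hκ0 : (0:ℝ) < κ := by linarith
  set F : ℕ → ℝ := fun b => dR κ b * (Nat.gcd q b : ℝ) / (b : ℝ) ^ s with hF
  have hF_nonneg : ∀ b, 0 ≤ F b := fun b =>
    div_nonneg (mul_nonneg (dR_nonneg hκ0.le b) (Nat.cast_nonneg _))
      (Real.rpow_nonneg (Nat.cast_nonneg _) _)
  have hF1 : F 1 = 1 := by
    simp [hF, dR_one, Nat.gcd_one_right, Real.one_rpow]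
  have hFmul : ∀ {m n : ℕ}, Nat.Coprime m n → F (m * n) = F m * F n := by
    intro m n h
    rcases eq_or_ne m 0 with rfl | hm
    · have hn1 : n = 1 := by simpa [Nat.coprime_zero_left] using h
      subst hn1; simp [hF1]
    rcases eq_or_ne n 0 with rfl | hn
    · have hm1 : m = 1 := by simpa [Nat.coprime_zero_right] using h
      subst hm1; simp [hF1]
    have hgcd : Nat.gcd q (m * n) = Nat.gcd q m * Nat.gcd q n := Nat.Coprime.gcd_mul q h
    have hrpow : ((m * n : ℕ) : ℝ) ^ s = (m : ℝ) ^ s * (n : ℝ) ^ s := by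
      push_cast
      exact Real.mul_rpow (Nat.cast_nonneg _) (Nat.cast_nonneg _)
    simp only [hF, dR_mul κ h, hgcd, hrpow]
    push_cast
    ring
  have hFsummable : ∀ {p : ℕ}, p.Prime → Summable (fun n : ℕ => ‖F (p ^ n)‖) := by
    intro p hp
    refine ((local_bound κ s hκ hs hs1 hq.ne' hp).1).congr fun n => ?_
    rw [Real.norm_eq_abs, abs_of_nonneg (hF_nonneg _)]
  have hEuler := EulerProduct.summable_and_hasSum_factoredNumbers_prod_filter_prime_tsum
    hF1 hFmul hFsummable q.primeFactors
  have hfilter : {p ∈ q.primeFactors | p.Prime} = q.primeFactors :=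
    Finset.filter_true_of_mem fun p hp => Nat.prime_of_mem_primeFactors hp
  rw [hfilter] at hEuler
  have hSumSub : Summable (fun m : Nat.factoredNumbers q.primeFactors => F m) :=
    hEuler.1.of_norm
  have htsum_eq : (∑' m : Nat.factoredNumbers q.primeFactors, F m)
      = ∏ p ∈ q.primeFactors, ∑' n : ℕ, F (p ^ n) := hEuler.2.tsum_eq
  -- identify index sets
  have hmem : ∀ b : ℕ, (1 ≤ b ∧ ∀ p : ℕ, p.Prime → p ∣ b → p ∣ q)
      ↔ b ∈ Nat.factoredNumbers q.primeFactors := by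
    intro b
    rw [Nat.mem_factoredNumbers]
    constructor
    · rintro ⟨hb, h⟩
      refine ⟨by omega, fun p hp => ?_⟩
      rw [Nat.mem_primeFactorsList (by omega : b ≠ 0)] at hp
      exact Nat.mem_primeFactors.2 ⟨hp.1, h p hp.1 hp.2, hq.ne'⟩
    · rintro ⟨hb, h⟩
      refine ⟨by omega, fun p hp hpb => ?_⟩
      exact Nat.dvd_of_mem_primeFactors (h p ((Nat.mem_primeFactorsList hb).2 ⟨hp, hpb⟩))
  -- convert LHS
  have hLHS : (∑' b : ℕ, if 1 ≤ b ∧ ∀ p : ℕ, p.Prime → p ∣ b → p ∣ q then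
        ENNReal.ofReal (F b) else 0)
      = ENNReal.ofReal (∑' m : Nat.factoredNumbers q.primeFactors, F m) := by
    rw [ENNReal.ofReal_tsum_of_nonneg
      (fun m : Nat.factoredNumbers q.primeFactors => hF_nonneg m) hSumSub,
      _root_.tsum_subtype (Nat.factoredNumbers q.primeFactors) (fun b => ENNReal.ofReal (F b))]
    apply tsum_congr
    intro b
    rw [Set.indicator_apply]
    exact if_congr (hmem b) rfl rfl
  rw [hLHS]
  apply ENNReal.ofReal_le_ofReal
  rw [htsum_eq]
  -- bound the product
  have hlocal : ∀ p ∈ q.primeFactors,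
      (∑' n : ℕ, F (p ^ n)) ≤ (((p : ℝ) ^ (q.factorization p : ℕ)) ^ ((1:ℝ) - s))
        * Ak (κ + 1) (q.factorization p) * (1 + Sk κ * (p : ℝ) ^ (-((3:ℝ)/4))) :=
    fun p hp => (local_bound κ s hκ hs hs1 hq.ne' (Nat.prime_of_mem_primeFactors hp)).2
  have hprod_le : (∏ p ∈ q.primeFactors, ∑' n : ℕ, F (p ^ n))
      ≤ ∏ p ∈ q.primeFactors, ((((p : ℝ) ^ (q.factorization p : ℕ)) ^ ((1:ℝ) - s))
        * Ak (κ + 1) (q.factorization p) * (1 + Sk κ * (p : ℝ) ^ (-((3:ℝ)/4)))) :=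
    Finset.prod_le_prod (fun p _ => tsum_nonneg fun n => hF_nonneg _) hlocal
  refine hprod_le.trans ?_
  rw [Finset.prod_mul_distrib, Finset.prod_mul_distrib]
  -- the three factors
  have hP1 : (∏ p ∈ q.primeFactors, (((p : ℝ) ^ (q.factorization p : ℕ)) ^ ((1:ℝ) - s)))
      = (q : ℝ) ^ ((1:ℝ) - s) := by
    have hqprod : (∏ p ∈ q.primeFactors, ((p : ℝ) ^ (q.factorization p : ℕ))) = (q : ℝ) := by
      have := Nat.factorization_prod_pow_eq_self hq.ne'
      rw [Finsupp.prod, Nat.support_factorization] at this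
      exact_mod_cast this
    rw [← hqprod, ← Real.finset_prod_rpow _ _ (fun p _ => by positivity) _]
  have hP2 : (∏ p ∈ q.primeFactors, Ak (κ + 1) (q.factorization p)) = dR (κ + 1) q :=
    (dR_eq_prod (κ + 1) q).symm
  have hP3 : (∏ p ∈ q.primeFactors, (1 + Sk κ * (p : ℝ) ^ (-((3:ℝ)/4))))
      ≤ Real.exp (Sk κ * T) := by
    have hterm : ∀ p ∈ q.primeFactors, (1 + Sk κ * (p : ℝ) ^ (-((3:ℝ)/4)))
        ≤ Real.exp (Sk κ * (p : ℝ) ^ (-((3:ℝ)/4))) := by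
      intro p _
      linarith [Real.add_one_le_exp (Sk κ * (p : ℝ) ^ (-((3:ℝ)/4)))]
    calc (∏ p ∈ q.primeFactors, (1 + Sk κ * (p : ℝ) ^ (-((3:ℝ)/4))))
        ≤ ∏ p ∈ q.primeFactors, Real.exp (Sk κ * (p : ℝ) ^ (-((3:ℝ)/4))) := by
          apply Finset.prod_le_prod (fun p _ => ?_) hterm
          have : 0 ≤ Sk κ * (p : ℝ) ^ (-((3:ℝ)/4)) :=
            mul_nonneg (Sk_nonneg hκ0) (Real.rpow_nonneg (Nat.cast_nonneg _) _)
          linarith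
      _ = Real.exp (∑ p ∈ q.primeFactors, Sk κ * (p : ℝ) ^ (-((3:ℝ)/4))) :=
          (Real.exp_sum _ _).symm
      _ ≤ Real.exp (Sk κ * T) := by
          rw [← Finset.mul_sum]
          exact Real.exp_le_exp.2 (mul_le_mul_of_nonneg_left hT (Sk_nonneg hκ0))
  rw [hP1, hP2]
  calc (q : ℝ) ^ ((1:ℝ) - s) * dR (κ + 1) q
        * (∏ p ∈ q.primeFactors, (1 + Sk κ * (p : ℝ) ^ (-((3:ℝ)/4))))
      ≤ (q : ℝ) ^ ((1:ℝ) - s) * dR (κ + 1) q * Real.exp (Sk κ * T) := by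
        apply mul_le_mul_of_nonneg_left hP3
          (mul_nonneg (Real.rpow_nonneg (Nat.cast_nonneg _) _) (dR_nonneg (by linarith) q))
    _ = Real.exp (Sk κ * T) * (q : ℝ) ^ ((1:ℝ) - s) * dR (κ + 1) q := by ring

/-- Tail bounds: for `q` with `∑_{p ∣ q} (log p)^{A₁+1} p^{−3/4} ≤ D`,
`∑_{b : p ∣ b ⇒ p ∣ q} d_κ(b) (q,b) b^{−3/4} ≤ C q^{1/4} d_{κ+1}(q)` and
`∑_{b : p ∣ b ⇒ p ∣ q} d_κ(b) (q,b) b^{−1} ≤ C d_{κ+1}(q)`. -/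
theorem smooth_tail_sums_bounded (κ A₁ D : ℝ) (hκ : 1 < κ) (hA₁pos : 0 < A₁) (hD : 0 < D) :
    ∃ C : ℝ, 0 < C ∧ ∀ q : ℕ, 0 < q →
      (∑ p ∈ q.primeFactors, Real.log p ^ (A₁ + 1) / (p : ℝ) ^ ((3 : ℝ) / 4)) ≤ D →
      (∑' b : ℕ, if 1 ≤ b ∧ ∀ p : ℕ, p.Prime → p ∣ b → p ∣ q then
            ENNReal.ofReal (dR κ b * (Nat.gcd q b : ℝ) / (b : ℝ) ^ ((3 : ℝ) / 4)) else 0)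
          ≤ ENNReal.ofReal (C * (q : ℝ) ^ ((1 : ℝ) / 4) * dR (κ + 1) q) ∧
      (∑' b : ℕ, if 1 ≤ b ∧ ∀ p : ℕ, p.Prime → p ∣ b → p ∣ q then
            ENNReal.ofReal (dR κ b * (Nat.gcd q b : ℝ) / (b : ℝ)) else 0)
          ≤ ENNReal.ofReal (C * dR (κ + 1) q) := by
  have hL : (0:ℝ) < Real.log 2 ^ (A₁ + 1) :=
    Real.rpow_pos_of_pos (Real.log_pos (by norm_num)) _
  refine ⟨Real.exp (Sk κ * (D / Real.log 2 ^ (A₁ + 1))), Real.exp_pos _, ?_⟩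
  intro q hq hhyp
  set T : ℝ := D / Real.log 2 ^ (A₁ + 1) with hTdef
  have hT : ∑ p ∈ q.primeFactors, (p : ℝ) ^ (-((3:ℝ)/4)) ≤ T := by
    have key : ∀ p ∈ q.primeFactors, (p : ℝ) ^ (-((3:ℝ)/4))
        ≤ (Real.log p ^ (A₁ + 1) / (p : ℝ) ^ ((3:ℝ)/4)) / Real.log 2 ^ (A₁ + 1) := by
      intro p hp
      have hpp := Nat.prime_of_mem_primeFactors hp
      have hp2 : (2:ℝ) ≤ (p:ℝ) := by exact_mod_cast hpp.two_le
      have hppos : (0:ℝ) < (p:ℝ) := by linarith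
      have hlog : Real.log 2 ^ (A₁ + 1) ≤ Real.log p ^ (A₁ + 1) :=
        Real.rpow_le_rpow (Real.log_nonneg (by norm_num))
          (Real.log_le_log (by norm_num) hp2) (by linarith)
      have hp34 : (0:ℝ) < (p:ℝ) ^ ((3:ℝ)/4) := Real.rpow_pos_of_pos hppos _
      rw [Real.rpow_neg hppos.le, div_div, inv_eq_one_div,
        div_le_div_iff₀ hp34 (by positivity)]
      nlinarith
    calc ∑ p ∈ q.primeFactors, (p : ℝ) ^ (-((3:ℝ)/4))
        ≤ ∑ p ∈ q.primeFactors,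
            (Real.log p ^ (A₁ + 1) / (p : ℝ) ^ ((3:ℝ)/4)) / Real.log 2 ^ (A₁ + 1) :=
          Finset.sum_le_sum key
      _ = (∑ p ∈ q.primeFactors, Real.log p ^ (A₁ + 1) / (p : ℝ) ^ ((3:ℝ)/4))
            / Real.log 2 ^ (A₁ + 1) := by rw [Finset.sum_div]
      _ ≤ T := by
          rw [hTdef]
          gcongr
  constructor
  · have h1 := smooth_sum_le κ ((3:ℝ)/4) hκ le_rfl (by norm_num) q hq T hT
    rw [show (1:ℝ) - (3:ℝ)/4 = (1:ℝ)/4 by norm_num] at h1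
    exact h1
  · have h2 := smooth_sum_le κ 1 hκ (by norm_num) le_rfl q hq T hT
    rw [show (1:ℝ) - (1:ℝ) = 0 by norm_num, Real.rpow_zero, mul_one] at h2
    simp only [Real.rpow_one] at h2
    exact h2
end

section
/- Let κ > 1, ε > 0, N ≥ 2, let f : ℕ → ℂ be multiplicative, and let s' be a squarefree positive integer such that for every prime p | s': |f(p)| ≤ κ, f(p) ≠ 1, and moreover Σ_{p | s'} (log p)/min{|f(p) − 1|, 1} ≤ ε (log N)/κ. Then for every integer h ≥ 1: | Σ_{b | s'} f(b) μ(b) (log b)^h | ≤ ( Π_{p | s'} |1 − f(p)| ) · (ε log N)^h. -/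
open Finset

private lemma map_prod_aux (f : ℕ → ℂ) (hf1 : f 1 = 1)
    (hfmul : ∀ m n : ℕ, Nat.Coprime m n → f (m * n) = f m * f n) :
    ∀ (T : Finset ℕ), (∀ p ∈ T, p.Prime) → f (∏ p ∈ T, p) = ∏ p ∈ T, f p := by
  intro T
  induction T using Finset.induction_on with
  | empty => simp [hf1]
  | @insert q T' hq ih =>
    intro hT
    have hqp : q.Prime := hT q (mem_insert_self q T')
    have hT' : ∀ p ∈ T', p.Prime := fun p hp => hT p (mem_insert_of_mem hp)
    have hcop : Nat.Coprime q (∏ p ∈ T', p) := by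
      apply Nat.Coprime.prod_right
      intro p hp
      exact (Nat.coprime_primes hqp (hT' p hp)).mpr (fun hqe => hq (hqe ▸ hp))
    rw [prod_insert hq, prod_insert hq, hfmul q _ hcop, ih hT']

private lemma sum_powerset_filter_subset_aux (g : ℕ → ℂ) (S A : Finset ℕ) (hA : A ⊆ S) :
    ∑ T ∈ S.powerset.filter (fun T => A ⊆ T), ∏ p ∈ T, g p
      = (∏ p ∈ A, g p) * ∏ p ∈ S \ A, (1 + g p) := by
  classical
  have h1 : ∑ T ∈ S.powerset.filter (fun T => A ⊆ T), ∏ p ∈ T, g p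
      = ∑ U ∈ (S \ A).powerset, (∏ p ∈ U, g p) * ∏ p ∈ A, g p := by
    refine Finset.sum_nbij' (fun T => T \ A) (fun U => U ∪ A) ?_ ?_ ?_ ?_ ?_
    · intro T hT
      simp only [mem_filter, mem_powerset] at hT
      exact mem_powerset.mpr (Finset.sdiff_subset_sdiff hT.1 le_rfl)
    · intro U hU
      rw [mem_powerset, Finset.subset_sdiff] at hU
      simp only [mem_filter, mem_powerset]
      exact ⟨Finset.union_subset hU.1 hA, Finset.subset_union_right⟩
    · intro T hT
      simp only [mem_filter, mem_powerset] at hT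
      exact Finset.sdiff_union_of_subset hT.2
    · intro U hU
      rw [mem_powerset, Finset.subset_sdiff] at hU
      exact Finset.union_sdiff_cancel_right hU.2
    · intro T hT
      simp only [mem_filter, mem_powerset] at hT
      rw [← Finset.prod_sdiff hT.2]
  rw [h1, ← Finset.sum_mul, mul_comm]
  congr 1
  have h2 : ∏ p ∈ S \ A, (1 + g p) = ∏ p ∈ S \ A, (g p + 1) := by
    exact Finset.prod_congr rfl fun p _ => add_comm _ _
  rw [h2, Finset.prod_add]
  exact Finset.sum_congr rfl fun T hT => by simp

/-- Multinomial bound: `|∑_{b ∣ s'} f(b) μ(b) (log b)^h| ≤ (∏_{p ∣ s'} |1 − f(p)|)(ε log N)^h`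
for squarefree `s'` all of whose prime factors satisfy `|f(p)| ≤ κ`, `f(p) ≠ 1` and
`∑_{p ∣ s'} log p / min{|f(p) − 1|, 1} ≤ ε log N / κ`. -/
theorem moebius_log_sum_bound (κ ε : ℝ) (hκ : 1 < κ) (hε : 0 < ε)
    (N : ℕ) (hN : 2 ≤ N)
    (f : ℕ → ℂ) (hf1 : f 1 = 1)
    (hfmul : ∀ m n : ℕ, Nat.Coprime m n → f (m * n) = f m * f n)
    (s' : ℕ) (hs : Squarefree s')
    (hfp : ∀ p : ℕ, p.Prime → p ∣ s' → ‖f p‖ ≤ κ ∧ f p ≠ 1)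
    (hsum : ∑ p ∈ s'.primeFactors, Real.log p / min ‖f p - 1‖ 1
      ≤ ε * Real.log N / κ)
    (h : ℕ) (hh : 1 ≤ h) :
    ‖∑ b ∈ s'.divisors,
        f b * ((ArithmeticFunction.moebius b : ℤ) : ℂ) * (Real.log b : ℂ) ^ h‖
      ≤ (∏ p ∈ s'.primeFactors, ‖1 - f p‖) * (ε * Real.log N) ^ h := by
  classical
  have hs0 : s' ≠ 0 := hs.ne_zero
  set S := s'.primeFactors with hSdef
  have hpS : ∀ p ∈ S, p.Prime := fun p hp => Nat.prime_of_mem_primeFactors hp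
  have hpd : ∀ p ∈ S, p ∣ s' := fun p hp => Nat.dvd_of_mem_primeFactors hp
  set L : ℕ → ℝ := fun p => Real.log p with hLdef
  set m : ℕ → ℝ := fun p => min (‖f p - 1‖) 1 with hmdef
  have habs_comm : ∀ p : ℕ, ‖f p - 1‖ = ‖1 - f p‖ := by
    intro p; rw [← neg_sub, norm_neg]
  have hm_pos : ∀ p ∈ S, 0 < m p := by
    intro p hp
    have hne := (hfp p (hpS p hp) (hpd p hp)).2
    have h1 : 0 < ‖f p - 1‖ :=
      norm_pos_iff.mpr (sub_ne_zero.mpr hne)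
    exact lt_min h1 one_pos
  have hm_le_one : ∀ p : ℕ, m p ≤ 1 := fun p => min_le_right _ _
  have hm_le : ∀ p : ℕ, m p ≤ ‖1 - f p‖ := by
    intro p; rw [← habs_comm]; exact min_le_left _ _
  have hL0 : ∀ p ∈ S, 0 ≤ L p := by
    intro p hp
    exact Real.log_nonneg (by exact_mod_cast (hpS p hp).one_lt.le)
  have hκ0 : (0:ℝ) < κ := lt_trans one_pos hκ
  -- per-prime bound
  have hkey : ∀ p ∈ S, ‖f p‖ ≤ ‖1 - f p‖ * (κ / m p) := by
    intro p hp
    have h1 : ‖f p‖ ≤ κ := (hfp p (hpS p hp) (hpd p hp)).1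
    have h2 : κ = κ / m p * m p := by
      rw [div_mul_cancel₀ _ (hm_pos p hp).ne']
    calc ‖f p‖ ≤ κ := h1
      _ = κ / m p * m p := h2
      _ ≤ κ / m p * ‖1 - f p‖ := by
          apply mul_le_mul_of_nonneg_left (hm_le p)
          exact le_of_lt (div_pos hκ0 (hm_pos p hp))
      _ = ‖1 - f p‖ * (κ / m p) := mul_comm _ _
  -- Step 1 : rewrite as sum over powerset of prime factors
  have step1 : (∑ b ∈ s'.divisors,
        f b * ((ArithmeticFunction.moebius b : ℤ) : ℂ) * (Real.log b : ℂ) ^ h)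
      = ∑ T ∈ S.powerset, (∏ p ∈ T, -f p) * (((∑ p ∈ T, L p : ℝ)) : ℂ) ^ h := by
    rw [← Nat.divisors_filter_squarefree_of_squarefree hs,
        Nat.sum_divisors_filter_squarefree hs0, Nat.factors_eq]
    simp only [List.toFinset_coe, Nat.toFinset_factors]
    refine Finset.sum_congr rfl ?_
    intro T hT
    rw [Finset.mem_powerset] at hT
    have hTp : ∀ p ∈ T, p.Prime := fun p hp => hpS p (hT hp)
    rw [Finset.prod_val]
    have hb : f (∏ p ∈ T, p) = ∏ p ∈ T, f p := map_prod_aux f hf1 hfmul T hTp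
    have hmu : ArithmeticFunction.moebius (∏ p ∈ T, p)
        = ∏ p ∈ T, ArithmeticFunction.moebius p :=
      ArithmeticFunction.IsMultiplicative.map_prod_of_subset_primeFactors
        ArithmeticFunction.isMultiplicative_moebius s' T hT
    have hlog : Real.log ((∏ p ∈ T, p : ℕ) : ℝ) = ∑ p ∈ T, L p := by
      rw [Nat.cast_prod, Real.log_prod]
      intro p hp; exact_mod_cast (hTp p hp).pos.ne'
    simp only [id]
    rw [hb, hmu, hlog]
    congr 1
    push_cast
    rw [← Finset.prod_mul_distrib]
    refine Finset.prod_congr rfl ?_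
    intro p hp
    rw [ArithmeticFunction.moebius_apply_prime (hTp p hp)]
    push_cast
    ring
  -- Step 2: expand the power as a sum over tuples
  set P := Fintype.piFinset (fun _ : Fin h => S) with hPdef
  have step2 : ∀ T ∈ S.powerset, (((∑ p ∈ T, L p : ℝ)) : ℂ) ^ h
      = ∑ τ ∈ P, if (∀ i, τ i ∈ T) then ∏ i, ((L (τ i) : ℝ) : ℂ) else 0 := by
    intro T hT
    rw [Finset.mem_powerset] at hT
    have hfil : (P.filter (fun τ => ∀ i, τ i ∈ T)) = Fintype.piFinset (fun _ : Fin h => T) := by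
      ext τ
      simp only [Finset.mem_filter, Fintype.mem_piFinset, hPdef]
      exact ⟨fun hx => hx.2, fun hx => ⟨fun i => hT (hx i), hx⟩⟩
    push_cast
    rw [Finset.sum_pow', ← hfil, Finset.sum_filter]
  -- Step 3: swap sums
  have step3 : (∑ b ∈ s'.divisors,
        f b * ((ArithmeticFunction.moebius b : ℤ) : ℂ) * (Real.log b : ℂ) ^ h)
      = ∑ τ ∈ P, ((∏ p ∈ Finset.image τ Finset.univ, -f p)
          * ∏ p ∈ S \ Finset.image τ Finset.univ, (1 - f p)) * ∏ i, ((L (τ i) : ℝ) : ℂ) := by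
    rw [step1, Finset.sum_congr rfl (fun T hT => by rw [step2 T hT])]
    simp only [Finset.mul_sum]
    rw [Finset.sum_comm]
    refine Finset.sum_congr rfl ?_
    intro τ hτ
    have hA : Finset.image τ Finset.univ ⊆ S := by
      rw [Finset.image_subset_iff]
      intro i _
      exact (Fintype.mem_piFinset.mp hτ) i
    have hcond : ∀ T : Finset ℕ, (∀ i, τ i ∈ T) ↔ Finset.image τ Finset.univ ⊆ T := by
      intro T
      rw [Finset.image_subset_iff]
      exact ⟨fun hx i _ => hx i, fun hx i => hx i (Finset.mem_univ i)⟩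
    calc ∑ T ∈ S.powerset, (∏ p ∈ T, -f p) *
            (if (∀ i, τ i ∈ T) then ∏ i, ((L (τ i) : ℝ) : ℂ) else 0)
        = ∑ T ∈ S.powerset, (if Finset.image τ Finset.univ ⊆ T
            then (∏ p ∈ T, -f p) * ∏ i, ((L (τ i) : ℝ) : ℂ) else 0) := by
          refine Finset.sum_congr rfl fun T _ => ?_
          simp only [hcond T, mul_ite, mul_zero]
      _ = ∑ T ∈ S.powerset.filter (fun T => Finset.image τ Finset.univ ⊆ T),
            (∏ p ∈ T, -f p) * ∏ i, ((L (τ i) : ℝ) : ℂ) := (Finset.sum_filter _ _).symm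
      _ = (∑ T ∈ S.powerset.filter (fun T => Finset.image τ Finset.univ ⊆ T),
            ∏ p ∈ T, -f p) * ∏ i, ((L (τ i) : ℝ) : ℂ) := (Finset.sum_mul _ _ _).symm
      _ = ((∏ p ∈ Finset.image τ Finset.univ, -f p)
          * ∏ p ∈ S \ Finset.image τ Finset.univ, (1 - f p)) * ∏ i, ((L (τ i) : ℝ) : ℂ) := by
          rw [sum_powerset_filter_subset_aux (fun p => -f p) S _ hA]
          have hpr : ∏ p ∈ S \ Finset.image τ Finset.univ, (1 + -f p)
              = ∏ p ∈ S \ Finset.image τ Finset.univ, (1 - f p) :=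
            Finset.prod_congr rfl fun p _ => by ring
          rw [hpr]
  -- abs bound for each tuple
  set C := ∏ p ∈ S, ‖1 - f p‖ with hCdef
  have hC0 : 0 ≤ C := Finset.prod_nonneg fun p _ => norm_nonneg _
  have habs_term : ∀ τ ∈ P,
      ‖((∏ p ∈ Finset.image τ Finset.univ, -f p)
          * ∏ p ∈ S \ Finset.image τ Finset.univ, (1 - f p)) * ∏ i, ((L (τ i) : ℝ) : ℂ)‖
        ≤ C * ∏ i, (κ * L (τ i) / m (τ i)) := by
    intro τ hτ
    have hτS : ∀ i, τ i ∈ S := Fintype.mem_piFinset.mp hτ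
    have hA : Finset.image τ Finset.univ ⊆ S := by
      rw [Finset.image_subset_iff]; exact fun i _ => hτS i
    set A := Finset.image τ Finset.univ with hAdef
    rw [norm_mul, norm_mul, norm_prod, norm_prod, norm_prod]
    have e1 : ∀ p, ‖-f p‖ = ‖f p‖ := fun p => norm_neg _
    have e2 : ∀ i, ‖((L (τ i) : ℝ) : ℂ)‖ = L (τ i) := by
      intro i
      rw [Complex.norm_real, Real.norm_eq_abs, abs_of_nonneg (hL0 _ (hτS i))]
    simp only [e1, e2]
    -- now a real inequality
    have h1 : ∏ p ∈ A, ‖f p‖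
        ≤ (∏ p ∈ A, ‖1 - f p‖) * ∏ p ∈ A, (κ / m p) := by
      rw [← Finset.prod_mul_distrib]
      refine Finset.prod_le_prod (fun p _ => norm_nonneg _) ?_
      intro p hp
      exact hkey p (hA hp)
    have h2 : ∏ p ∈ A, (κ / m p) ≤ ∏ i, (κ / m (τ i)) := by
      have hone : ∀ p ∈ A, (1:ℝ) ≤ κ / m p := by
        intro p hp
        rw [le_div_iff₀ (hm_pos p (hA hp))]
        calc (1:ℝ) * m p = m p := one_mul _
          _ ≤ 1 := hm_le_one p
          _ ≤ κ := hκ.le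
      rw [Finset.prod_comp (fun p => κ / m p) τ]
      refine Finset.prod_le_prod (fun p hp => by positivity) ?_
      intro p hp
      have hcard : ({i ∈ Finset.univ | τ i = p} : Finset (Fin h)).Nonempty := by
        obtain ⟨i, _, hi⟩ := Finset.mem_image.mp hp
        exact ⟨i, Finset.mem_filter.mpr ⟨Finset.mem_univ i, hi⟩⟩
      exact le_self_pow₀ (hone p hp) (Finset.card_ne_zero_of_mem hcard.choose_spec)
    have h3 : ∀ i, 0 ≤ L (τ i) := fun i => hL0 _ (hτS i)
    have hCsplit : (∏ p ∈ A, ‖1 - f p‖)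
        * (∏ p ∈ S \ A, ‖1 - f p‖) = C := by
      rw [mul_comm, Finset.prod_sdiff hA]
    calc (∏ p ∈ A, ‖f p‖) * (∏ p ∈ S \ A, ‖1 - f p‖)
          * ∏ i, L (τ i)
        ≤ ((∏ p ∈ A, ‖1 - f p‖) * ∏ p ∈ A, (κ / m p))
            * (∏ p ∈ S \ A, ‖1 - f p‖) * ∏ i, L (τ i) := by
          apply mul_le_mul_of_nonneg_right _ (Finset.prod_nonneg fun i _ => h3 i)
          apply mul_le_mul_of_nonneg_right h1
            (Finset.prod_nonneg fun p _ => norm_nonneg _)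
      _ ≤ ((∏ p ∈ A, ‖1 - f p‖) * ∏ i, (κ / m (τ i)))
            * (∏ p ∈ S \ A, ‖1 - f p‖) * ∏ i, L (τ i) := by
          apply mul_le_mul_of_nonneg_right _ (Finset.prod_nonneg fun i _ => h3 i)
          apply mul_le_mul_of_nonneg_right _
            (Finset.prod_nonneg fun p _ => norm_nonneg _)
          exact mul_le_mul_of_nonneg_left h2
            (Finset.prod_nonneg fun p _ => norm_nonneg _)
      _ = C * ((∏ i, (κ / m (τ i))) * ∏ i, L (τ i)) := by
          rw [← hCsplit]; ring
      _ = C * ∏ i, (κ * L (τ i) / m (τ i)) := by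
          rw [← Finset.prod_mul_distrib]
          congr 1
          exact Finset.prod_congr rfl fun i _ => by ring
  -- sum the bounds
  have step5 : ∑ τ ∈ P, ∏ i, (κ * L (τ i) / m (τ i)) = (∑ p ∈ S, κ * L p / m p) ^ h := by
    rw [Finset.sum_pow']
  have hbase0 : 0 ≤ ∑ p ∈ S, κ * L p / m p := by
    refine Finset.sum_nonneg fun p hp => ?_
    have := hm_pos p hp
    have := hL0 p hp
    positivity
  have hbase : ∑ p ∈ S, κ * L p / m p ≤ ε * Real.log N := by
    have : ∑ p ∈ S, κ * L p / m p = κ * ∑ p ∈ S, L p / m p := by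
      rw [Finset.mul_sum]
      exact Finset.sum_congr rfl fun p _ => by ring
    rw [this]
    calc κ * ∑ p ∈ S, L p / m p ≤ κ * (ε * Real.log N / κ) :=
          mul_le_mul_of_nonneg_left hsum hκ0.le
      _ = ε * Real.log N := by field_simp
  calc ‖∑ b ∈ s'.divisors,
        f b * ((ArithmeticFunction.moebius b : ℤ) : ℂ) * (Real.log b : ℂ) ^ h‖
      = ‖∑ τ ∈ P, ((∏ p ∈ Finset.image τ Finset.univ, -f p)
          * ∏ p ∈ S \ Finset.image τ Finset.univ, (1 - f p)) * ∏ i, ((L (τ i) : ℝ) : ℂ)‖ := by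
        rw [step3]
    _ ≤ ∑ τ ∈ P, ‖((∏ p ∈ Finset.image τ Finset.univ, -f p)
          * ∏ p ∈ S \ Finset.image τ Finset.univ, (1 - f p)) * ∏ i, ((L (τ i) : ℝ) : ℂ)‖ := by
        exact norm_sum_le _ _
    _ ≤ ∑ τ ∈ P, C * ∏ i, (κ * L (τ i) / m (τ i)) :=
        Finset.sum_le_sum habs_term
    _ = C * (∑ p ∈ S, κ * L p / m p) ^ h := by
        rw [← Finset.mul_sum, step5]
    _ ≤ C * (ε * Real.log N) ^ h :=
        mul_le_mul_of_nonneg_left (pow_le_pow_left₀ hbase0 hbase h) hC0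
end
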